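/- arXiv:0910.0793 — 4 statements merged into one kernel-verified Lean document; each statement's English description precedes it below -/
import Mathlib

section
/- Let Δ = Δ_0 + Δ_1 + ⋯ + Δ_k be a nef-partition of a reflexive polytope Δ ⊂ ℝ^d with dual nef-partition ∇ = ∇_0 + ⋯ + ∇_k in the dual space. Then: (i) for every nonzero lattice point u ∈ ∇_i ∩ ℤ^d one has min⟨Δ_j, u⟩ = 0 for all j ≠ i and min⟨Δ_i, u⟩ = −1; (ii) the dual of the Cayley cone satisfies σ̄∨ = ℝ_{≥0} · Conv(∇_0 + r_0*, ∇_1 + r_1*, …, ∇_k + r_k*); and (iii) Conv({u − Σ_{i=1}^k min⟨Δ_i,u⟩ e_i* : u ∈ Δ*} ∪ {e_1*, …, e_k*}) = Conv(∇_0, ∇_1 + e_1*, …, ∇_k + e_k*). -/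
open scoped Pointwise
open Set

noncomputable section

/-- The standard pairing on `ℝ^n`. -/
def pairing {n : ℕ} (x y : Fin n → ℝ) : ℝ := ∑ i, x i * y i

/-- A point of `ℝ^n` lying in the lattice `ℤ^n`. -/
def IsLatticePt {n : ℕ} (x : Fin n → ℝ) : Prop := ∀ i, ∃ z : ℤ, x i = (z : ℝ)

/-- A lattice polytope: the convex hull of finitely many lattice points. -/
def IsLatticePolytope {n : ℕ} (P : Set (Fin n → ℝ)) : Prop :=
  ∃ S : Set (Fin n → ℝ), S.Finite ∧ (∀ x ∈ S, IsLatticePt x) ∧ P = convexHull ℝ S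

/-- The dual polytope `P* = {y | ⟨x,y⟩ ≥ -1 ∀ x ∈ P}`. -/
def polarDual {n : ℕ} (P : Set (Fin n → ℝ)) : Set (Fin n → ℝ) :=
  {y | ∀ x ∈ P, -1 ≤ pairing x y}

/-- A reflexive polytope. -/
def IsReflexive {n : ℕ} (P : Set (Fin n → ℝ)) : Prop :=
  IsLatticePolytope P ∧ (0 : Fin n → ℝ) ∈ interior P ∧ IsLatticePolytope (polarDual P)

/-- `min⟨P, u⟩ = min_{x ∈ P} ⟨x, u⟩`. -/
def minPair {n : ℕ} (P : Set (Fin n → ℝ)) (u : Fin n → ℝ) : ℝ :=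
  sInf ((fun x => pairing x u) '' P)

/-- The real vector space `ℝ^d ⊕ ℝ^k`. -/
abbrev Vdk (d k : ℕ) := (Fin d → ℝ) × (Fin k → ℝ)

/-- The pairing on `ℝ^d ⊕ ℝ^k` (sum of the two standard pairings). -/
def pairingV {d k : ℕ} (x y : Vdk d k) : ℝ := pairing x.1 y.1 + pairing x.2 y.2

def IsLatticePtV {d k : ℕ} (x : Vdk d k) : Prop := IsLatticePt x.1 ∧ IsLatticePt x.2

def IsLatticePolytopeV {d k : ℕ} (P : Set (Vdk d k)) : Prop :=
  ∃ S : Set (Vdk d k), S.Finite ∧ (∀ x ∈ S, IsLatticePtV x) ∧ P = convexHull ℝ S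

def polarDualV {d k : ℕ} (P : Set (Vdk d k)) : Set (Vdk d k) :=
  {y | ∀ x ∈ P, -1 ≤ pairingV x y}

def IsReflexiveV {d k : ℕ} (P : Set (Vdk d k)) : Prop :=
  IsLatticePolytopeV P ∧ (0 : Vdk d k) ∈ interior P ∧ IsLatticePolytopeV (polarDualV P)

/-- The Cayley cone `σ̄ = {(t₀Δ₀ + ⋯ + t_kΔ_k, t₀, …, t_k) : tᵢ ≥ 0} ⊆ ℝ^d ⊕ ℝ^{k+1}`. -/
def cayleyCone {d k : ℕ} (Δ : Fin (k+1) → Set (Fin d → ℝ)) : Set (Vdk d (k+1)) :=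
  {p | (∀ i, 0 ≤ p.2 i) ∧ p.1 ∈ ∑ i, p.2 i • Δ i}

/-- The dual cone of a cone in `ℝ^d ⊕ ℝ^k`. -/
def dualConeV {d k : ℕ} (σ : Set (Vdk d k)) : Set (Vdk d k) :=
  {y | ∀ x ∈ σ, 0 ≤ pairingV x y}

/-- The shift vectors for `Conv(∇₀, ∇₁ + e₁*, …, ∇_k + e_k*)`: no shift for the index 0,
and `eᵢ*` for i = 1, …, k. -/
def nshift {k : ℕ} : Fin (k+1) → Fin k → ℝ :=
  Fin.cases 0 (fun i => Pi.single i 1)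

namespace NefAux

variable {n : ℕ}

lemma pairing_add_left (x y u : Fin n → ℝ) :
    pairing (x + y) u = pairing x u + pairing y u := by
  simp [pairing, add_mul, Finset.sum_add_distrib]

lemma pairing_smul_left (t : ℝ) (x u : Fin n → ℝ) :
    pairing (t • x) u = t * pairing x u := by
  simp [pairing, Finset.mul_sum, mul_assoc]

lemma pairing_zero_left (u : Fin n → ℝ) : pairing 0 u = 0 := by simp [pairing]

lemma pairing_add_right (x u v : Fin n → ℝ) :
    pairing x (u + v) = pairing x u + pairing x v := by
  simp [pairing, mul_add, Finset.sum_add_distrib]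

lemma pairing_smul_right (t : ℝ) (x u : Fin n → ℝ) :
    pairing x (t • u) = t * pairing x u := by
  simp only [pairing, Pi.smul_apply, smul_eq_mul]
  rw [Finset.mul_sum]
  exact Finset.sum_congr rfl fun i _ => by ring

lemma pairing_zero_right (x : Fin n → ℝ) : pairing x 0 = 0 := by simp [pairing]

lemma pairing_sum_left {ι : Type*} (s : Finset ι) (g : ι → (Fin n → ℝ)) (u : Fin n → ℝ) :
    pairing (∑ i ∈ s, g i) u = ∑ i ∈ s, pairing (g i) u := by
  classical
  induction s using Finset.induction_on with
  | empty => simp [pairing]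
  | insert _ _ h ih => simp [Finset.sum_insert h, pairing_add_left, ih]

lemma pairing_sum_right {ι : Type*} (s : Finset ι) (x : Fin n → ℝ) (g : ι → (Fin n → ℝ)) :
    pairing x (∑ i ∈ s, g i) = ∑ i ∈ s, pairing x (g i) := by
  classical
  induction s using Finset.induction_on with
  | empty => simp [pairing]
  | insert _ _ h ih => simp [Finset.sum_insert h, pairing_add_right, ih]

lemma pairing_self_pos {y : Fin n → ℝ} (hy : y ≠ 0) : 0 < pairing y y := by
  have h : ∃ i, y i ≠ 0 := by
    by_contra h
    push_neg at h
    exact hy (funext h)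
  obtain ⟨i, hi⟩ := h
  have : ∀ j ∈ Finset.univ, (0:ℝ) ≤ y j * y j := fun j _ => mul_self_nonneg _
  exact Finset.sum_pos' this ⟨i, Finset.mem_univ i, mul_self_pos.mpr hi⟩

lemma pairing_single_left (i : Fin n) (s : Fin n → ℝ) :
    pairing (Pi.single i 1) s = s i := by
  simp only [pairing, Pi.single_apply]
  rw [Finset.sum_eq_single i] <;> simp +contextual

lemma pairing_single_right (i : Fin n) (s : Fin n → ℝ) :
    pairing s (Pi.single i 1) = s i := by
  simp only [pairing, Pi.single_apply]
  rw [Finset.sum_eq_single i] <;> simp +contextual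

lemma pairing_int {x y : Fin n → ℝ} (hx : IsLatticePt x) (hy : IsLatticePt y) :
    ∃ z : ℤ, pairing x y = (z : ℝ) := by
  choose a ha using hx
  choose b hb using hy
  refine ⟨∑ i, a i * b i, ?_⟩
  simp only [pairing]
  push_cast
  exact Finset.sum_congr rfl fun i _ => by rw [ha i, hb i]

/-- The workhorse: the min of a linear functional on a polytope is attained at a generator. -/
lemma exists_min {P S : Set (Fin n → ℝ)} (hfin : S.Finite) (hP : P = convexHull ℝ S)
    (hne : P.Nonempty) (u : Fin n → ℝ) :
    ∃ x₀ ∈ S, minPair P u = pairing x₀ u ∧ (∀ x ∈ P, pairing x₀ u ≤ pairing x u) := by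
  have hSne : S.Nonempty := by
    rcases Set.eq_empty_or_nonempty S with h | h
    · subst h; rw [convexHull_empty] at hP; exact absurd (hP ▸ hne) (by simp)
    · exact h
  obtain ⟨x₀, hx₀S, hx₀min⟩ := Set.exists_min_image S (fun x => pairing x u) hfin hSne
  have hconv : Convex ℝ {x : Fin n → ℝ | pairing x₀ u ≤ pairing x u} := by
    intro x hx y hy a b ha hb hab
    simp only [Set.mem_setOf_eq] at hx hy ⊢
    have : pairing (a • x + b • y) u = a * pairing x u + b * pairing y u := by
      rw [pairing_add_left, pairing_smul_left, pairing_smul_left]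
    rw [this]
    calc pairing x₀ u = a * pairing x₀ u + b * pairing x₀ u := by rw [← add_mul, hab, one_mul]
    _ ≤ a * pairing x u + b * pairing y u :=
        add_le_add (mul_le_mul_of_nonneg_left hx ha) (mul_le_mul_of_nonneg_left hy hb)
  have hPsub : P ⊆ {x : Fin n → ℝ | pairing x₀ u ≤ pairing x u} := by
    rw [hP]; exact convexHull_min (fun x hx => hx₀min x hx) hconv
  have hx₀P : x₀ ∈ P := hP ▸ subset_convexHull ℝ S hx₀S
  refine ⟨x₀, hx₀S, ?_, fun x hx => hPsub hx⟩
  apply le_antisymm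
  · exact csInf_le ⟨pairing x₀ u, fun r ⟨x, hx, hr⟩ => hr ▸ hPsub hx⟩ ⟨x₀, hx₀P, rfl⟩
  · exact le_csInf ⟨pairing x₀ u, x₀, hx₀P, rfl⟩ (fun r ⟨x, hx, hr⟩ => hr ▸ hPsub hx)

lemma minPair_le {P : Set (Fin n → ℝ)} (h : IsLatticePolytope P) {x : Fin n → ℝ} (hx : x ∈ P)
    (u : Fin n → ℝ) : minPair P u ≤ pairing x u := by
  obtain ⟨S, hfin, -, hP⟩ := h
  obtain ⟨x₀, -, hmin, hle⟩ := exists_min hfin hP ⟨x, hx⟩ u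
  exact hmin ▸ hle x hx

lemma le_minPair {P : Set (Fin n → ℝ)} (hne : P.Nonempty) {c : ℝ} {u : Fin n → ℝ}
    (hc : ∀ x ∈ P, c ≤ pairing x u) : c ≤ minPair P u :=
  le_csInf (hne.image _) (fun r ⟨x, hx, hr⟩ => hr ▸ hc x hx)

lemma minPair_nonpos {P : Set (Fin n → ℝ)} (h : IsLatticePolytope P) (h0 : (0:Fin n → ℝ) ∈ P)
    (u : Fin n → ℝ) : minPair P u ≤ 0 := by
  have := minPair_le h h0 u
  rwa [pairing_zero_left] at this

lemma minPair_int {P : Set (Fin n → ℝ)} (h : IsLatticePolytope P) (hne : P.Nonempty)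
    {u : Fin n → ℝ} (hu : IsLatticePt u) : ∃ z : ℤ, minPair P u = (z : ℝ) := by
  obtain ⟨S, hfin, hlat, hP⟩ := h
  obtain ⟨x₀, hx₀S, hmin, -⟩ := exists_min hfin hP hne u
  obtain ⟨z, hz⟩ := pairing_int (hlat x₀ hx₀S) hu
  exact ⟨z, hmin ▸ hz⟩

lemma minPair_zero_right {P : Set (Fin n → ℝ)} (h : IsLatticePolytope P) (hne : P.Nonempty) :
    minPair P (0 : Fin n → ℝ) = 0 := by
  obtain ⟨x, hx⟩ := hne
  refine le_antisymm ?_ (le_minPair ⟨x, hx⟩ fun y _ => (pairing_zero_right y).ge)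
  have := minPair_le h hx (0 : Fin n → ℝ)
  rwa [pairing_zero_right] at this

lemma minPair_smul_right {P : Set (Fin n → ℝ)} (h : IsLatticePolytope P) (hne : P.Nonempty)
    {t : ℝ} (ht : 0 ≤ t) (u : Fin n → ℝ) : minPair P (t • u) = t * minPair P u := by
  rcases eq_or_lt_of_le ht with rfl | hpos
  · rw [zero_smul, zero_mul, minPair_zero_right h hne]
  obtain ⟨S, hfin, hlatS, hP⟩ := h
  obtain ⟨x₀, hx₀S, hmin, hle⟩ := exists_min hfin hP hne u
  have hx₀P : x₀ ∈ P := hP ▸ subset_convexHull ℝ S hx₀S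
  apply le_antisymm
  · calc minPair P (t • u) ≤ pairing x₀ (t • u) := minPair_le ⟨S, hfin, hlatS, hP⟩ hx₀P _
    _ = t * minPair P u := by rw [pairing_smul_right, hmin]
  · refine le_minPair hne fun x hx => ?_
    rw [pairing_smul_right]
    exact mul_le_mul_of_nonneg_left (minPair_le ⟨S, hfin, hlatS, hP⟩ hx u) ht

section Main

variable {d k : ℕ} {Δ : Fin (k+1) → Set (Fin d → ℝ)} {nabla : Fin (k+1) → Set (Fin d → ℝ)}

lemma zero_mem_tot (h0 : ∀ i, (0 : Fin d → ℝ) ∈ Δ i) : (0 : Fin d → ℝ) ∈ ∑ i, Δ i := by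
  rw [Set.mem_fintype_sum]
  exact ⟨fun _ => 0, fun i => h0 i, by simp⟩

lemma exists_attain {P : Set (Fin n → ℝ)} (h : IsLatticePolytope P) (hne : P.Nonempty)
    (u : Fin n → ℝ) : ∃ x ∈ P, pairing x u = minPair P u := by
  obtain ⟨S, hfin, hlatS, hP⟩ := h
  obtain ⟨x₀, hx₀S, hmin, -⟩ := exists_min hfin hP hne u
  exact ⟨x₀, hP ▸ subset_convexHull ℝ S hx₀S, hmin.symm⟩

lemma minPair_tot_sum (hlat : ∀ i, IsLatticePolytope (Δ i)) (h0 : ∀ i, (0 : Fin d → ℝ) ∈ Δ i)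
    (hlatP : IsLatticePolytope (∑ i, Δ i)) (u : Fin d → ℝ) :
    minPair (∑ i, Δ i) u = ∑ i, minPair (Δ i) u := by
  apply le_antisymm
  · have H : ∀ i, ∃ x ∈ Δ i, pairing x u = minPair (Δ i) u :=
      fun i => exists_attain (hlat i) ⟨0, h0 i⟩ u
    choose g hg hgp using H
    have hmem : (∑ i, g i) ∈ ∑ i, Δ i := by
      rw [Set.mem_fintype_sum]; exact ⟨g, hg, rfl⟩
    calc minPair (∑ i, Δ i) u ≤ pairing (∑ i, g i) u := minPair_le hlatP hmem u
    _ = ∑ i, minPair (Δ i) u := by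
        rw [pairing_sum_left]; exact Finset.sum_congr rfl fun i _ => hgp i
  · refine le_minPair ⟨0, zero_mem_tot h0⟩ fun x hx => ?_
    rw [Set.mem_fintype_sum] at hx
    obtain ⟨g, hg, rfl⟩ := hx
    rw [pairing_sum_left]
    exact Finset.sum_le_sum fun i _ => minPair_le (hlat i) (hg i) u

lemma minPair_tot_neg (hrefl : IsReflexive (∑ i, Δ i)) {y : Fin d → ℝ} (hy : y ≠ 0) :
    minPair (∑ i, Δ i) y < 0 := by
  obtain ⟨hlatP, hint, -⟩ := hrefl
  rw [mem_interior_iff_mem_nhds, Metric.mem_nhds_iff] at hint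
  obtain ⟨ε, hε, hball⟩ := hint
  have hny : (0:ℝ) < ‖y‖ := norm_pos_iff.2 hy
  set c : ℝ := ε / (2 * ‖y‖) with hcdef
  have hc : 0 < c := by positivity
  have hmem : (-c) • y ∈ ∑ i, Δ i := by
    apply hball
    rw [Metric.mem_ball, dist_zero_right, norm_smul]
    have : ‖(-c : ℝ)‖ = c := by rw [norm_neg, Real.norm_of_nonneg hc.le]
    rw [this, hcdef]
    have h2 : ‖y‖ * (ε / (2 * ‖y‖)) = ε / 2 := by
      field_simp
    linarith [h2]
  calc minPair (∑ i, Δ i) y ≤ pairing ((-c) • y) y := minPair_le hlatP hmem y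
  _ = -c * pairing y y := pairing_smul_left _ _ _
  _ < 0 := mul_neg_of_neg_of_pos (by linarith) (pairing_self_pos hy)

lemma eq_zero_of_minPair_nonneg (hrefl : IsReflexive (∑ i, Δ i)) {y : Fin d → ℝ}
    (h : 0 ≤ minPair (∑ i, Δ i) y) : y = 0 := by
  by_contra hy
  exact absurd h (not_le.2 (minPair_tot_neg hrefl hy))

lemma mem_polarDual_iff (hlatP : IsLatticePolytope (∑ i, Δ i)) (h0 : ∀ i, (0 : Fin d → ℝ) ∈ Δ i)
    {u : Fin d → ℝ} :
    u ∈ polarDual (∑ i, Δ i) ↔ -1 ≤ minPair (∑ i, Δ i) u :=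
  ⟨fun h => le_minPair ⟨0, zero_mem_tot h0⟩ h,
   fun h x hx => h.trans (minPair_le hlatP hx u)⟩

lemma dichotomy (hlat : ∀ i, IsLatticePolytope (Δ i)) (h0 : ∀ i, (0 : Fin d → ℝ) ∈ Δ i)
    (hrefl : IsReflexive (∑ i, Δ i)) {u : Fin d → ℝ} (hu : IsLatticePt u) (hu0 : u ≠ 0)
    (hpd : u ∈ polarDual (∑ i, Δ i)) :
    ∃ i, minPair (Δ i) u = -1 ∧ ∀ j, j ≠ i → minPair (Δ j) u = 0 := by
  classical
  have hm_nonpos : ∀ i, minPair (Δ i) u ≤ 0 := fun i => minPair_nonpos (hlat i) (h0 i) u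
  have hsum : ∑ i, minPair (Δ i) u = minPair (∑ i, Δ i) u :=
    (minPair_tot_sum hlat h0 hrefl.1 u).symm
  have h1 : -1 ≤ ∑ i, minPair (Δ i) u := by
    rw [hsum]; exact (mem_polarDual_iff hrefl.1 h0).1 hpd
  have h2 : ∑ i, minPair (Δ i) u < 0 := by
    rw [hsum]; exact minPair_tot_neg hrefl hu0
  have hex : ∃ i ∈ Finset.univ, minPair (Δ i) u < 0 := by
    by_contra h
    push_neg at h
    exact absurd (Finset.sum_nonneg fun i hi => h i hi) (not_le.2 h2)
  obtain ⟨i, -, hineg⟩ := hex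
  have hile : minPair (Δ i) u ≤ -1 := by
    obtain ⟨z, hz⟩ := minPair_int (hlat i) ⟨0, h0 i⟩ hu
    rw [hz] at hineg ⊢
    have : z < 0 := by exact_mod_cast hineg
    have : z ≤ -1 := by omega
    exact_mod_cast this
  have hsplit : minPair (Δ i) u + ∑ j ∈ Finset.univ.erase i, minPair (Δ j) u
      = ∑ j, minPair (Δ j) u := Finset.add_sum_erase _ (fun j => minPair (Δ j) u) (Finset.mem_univ i)
  have hrest_nonpos : ∑ j ∈ Finset.univ.erase i, minPair (Δ j) u ≤ 0 :=
    Finset.sum_nonpos fun j _ => hm_nonpos j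
  have hmi : minPair (Δ i) u = -1 := le_antisymm hile (by linarith)
  have hrest0 : ∑ j ∈ Finset.univ.erase i, minPair (Δ j) u = 0 := by linarith
  have hall := (Finset.sum_eq_zero_iff_of_nonpos fun j _ => hm_nonpos j).1 hrest0
  exact ⟨i, hmi, fun j hj => hall j (Finset.mem_erase.2 ⟨hj, Finset.mem_univ j⟩)⟩

lemma convex_polarDual (X : Set (Fin d → ℝ)) : Convex ℝ (polarDual X) := by
  intro y hy z hz a b ha hb hab
  intro x hx
  have h1 := hy x hx
  have h2 := hz x hx
  have : pairing x (a • y + b • z) = a * pairing x y + b * pairing x z := by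
    rw [pairing_add_right, pairing_smul_right, pairing_smul_right]
  rw [this]
  calc (-1 : ℝ) = a * (-1) + b * (-1) := by rw [← add_mul, hab]; ring
  _ ≤ a * pairing x y + b * pairing x z :=
      add_le_add (mul_le_mul_of_nonneg_left h1 ha) (mul_le_mul_of_nonneg_left h2 hb)


variable (hnabla : nabla = fun j =>
    {y | ∀ i, ∀ x ∈ Δ i, -(if i = j then (1 : ℝ) else 0) ≤ pairing x y})

include hnabla

lemma mem_nabla_iff (hlat : ∀ i, IsLatticePolytope (Δ i)) (h0 : ∀ i, (0 : Fin d → ℝ) ∈ Δ i)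
    {j : Fin (k+1)} {v : Fin d → ℝ} :
    v ∈ nabla j ↔ ∀ i, -(if i = j then (1:ℝ) else 0) ≤ minPair (Δ i) v := by
  subst hnabla
  simp only [Set.mem_setOf_eq]
  exact ⟨fun h i => le_minPair ⟨0, h0 i⟩ (h i),
    fun h i x hx => (h i).trans (minPair_le (hlat i) hx v)⟩

lemma zero_mem_nabla (j : Fin (k+1)) : (0 : Fin d → ℝ) ∈ nabla j := by
  subst hnabla
  intro i x hx
  rw [pairing_zero_right]
  split <;> norm_num

lemma nabla_minPair_zero (hlat : ∀ i, IsLatticePolytope (Δ i)) (h0 : ∀ i, (0 : Fin d → ℝ) ∈ Δ i)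
    {j : Fin (k+1)} {v : Fin d → ℝ} (hv : v ∈ nabla j) {i : Fin (k+1)} (hij : i ≠ j) :
    minPair (Δ i) v = 0 := by
  rw [mem_nabla_iff hnabla hlat h0] at hv
  have := hv i
  rw [if_neg hij] at this
  exact le_antisymm (minPair_nonpos (hlat i) (h0 i) v) (by linarith)

lemma nabla_minPair_ge (hlat : ∀ i, IsLatticePolytope (Δ i)) (h0 : ∀ i, (0 : Fin d → ℝ) ∈ Δ i)
    {j : Fin (k+1)} {v : Fin d → ℝ} (hv : v ∈ nabla j) :
    -1 ≤ minPair (Δ j) v := by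
  rw [mem_nabla_iff hnabla hlat h0] at hv
  have := hv j
  rwa [if_pos rfl] at this

lemma nabla_minPair_tot (hlat : ∀ i, IsLatticePolytope (Δ i)) (h0 : ∀ i, (0 : Fin d → ℝ) ∈ Δ i)
    (hlatP : IsLatticePolytope (∑ i, Δ i))
    {j : Fin (k+1)} {v : Fin d → ℝ} (hv : v ∈ nabla j) :
    minPair (∑ i, Δ i) v = minPair (Δ j) v := by
  rw [minPair_tot_sum hlat h0 hlatP]
  rw [Finset.sum_eq_single j]
  · intro i _ hij
    exact nabla_minPair_zero hnabla hlat h0 hv hij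
  · intro h
    exact absurd (Finset.mem_univ j) h

lemma nabla_subset_polar (hlat : ∀ i, IsLatticePolytope (Δ i))
    (h0 : ∀ i, (0 : Fin d → ℝ) ∈ Δ i) (hlatP : IsLatticePolytope (∑ i, Δ i))
    (j : Fin (k+1)) : nabla j ⊆ polarDual (∑ i, Δ i) := by
  intro v hv
  rw [mem_polarDual_iff hlatP h0, nabla_minPair_tot hnabla hlat h0 hlatP hv]
  exact nabla_minPair_ge hnabla hlat h0 hv

lemma nabla_eq_zero (hlat : ∀ i, IsLatticePolytope (Δ i)) (h0 : ∀ i, (0 : Fin d → ℝ) ∈ Δ i)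
    (hrefl : IsReflexive (∑ i, Δ i))
    {j : Fin (k+1)} {v : Fin d → ℝ} (hv : v ∈ nabla j) (hj : minPair (Δ j) v = 0) : v = 0 := by
  apply eq_zero_of_minPair_nonneg hrefl
  rw [nabla_minPair_tot hnabla hlat h0 hrefl.1 hv, hj]

lemma nabla_scale (hlat : ∀ i, IsLatticePolytope (Δ i)) (h0 : ∀ i, (0 : Fin d → ℝ) ∈ Δ i)
    {j : Fin (k+1)} {v : Fin d → ℝ} (hv : v ∈ nabla j) {c : ℝ} (hc : 0 < c)
    (hcv : minPair (Δ j) v = -c) : c⁻¹ • v ∈ nabla j := by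
  rw [mem_nabla_iff hnabla hlat h0] at hv ⊢
  intro i
  rw [minPair_smul_right (hlat i) ⟨0, h0 i⟩ (inv_nonneg.2 hc.le)]
  by_cases hij : i = j
  · subst hij
    rw [if_pos rfl, hcv]
    rw [mul_neg, inv_mul_cancel₀ (ne_of_gt hc)]
  · rw [if_neg hij]
    have h1 := hv i
    rw [if_neg hij] at h1
    simp only [neg_zero] at h1 ⊢
    positivity

lemma lemmaB (hlat : ∀ i, IsLatticePolytope (Δ i)) (h0 : ∀ i, (0 : Fin d → ℝ) ∈ Δ i)
    (hrefl : IsReflexive (∑ i, Δ i)) :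
    polarDual (∑ i, Δ i) = convexHull ℝ (⋃ i, nabla i) := by
  apply le_antisymm
  · obtain ⟨S', hfin, hlatS, hPD⟩ := hrefl.2.2
    rw [hPD]
    apply convexHull_min _ (convex_convexHull ℝ _)
    intro s hs
    have hspd : s ∈ polarDual (∑ i, Δ i) := hPD ▸ subset_convexHull ℝ S' hs
    apply subset_convexHull ℝ (⋃ i, nabla i)
    by_cases hs0 : s = 0
    · subst hs0
      exact Set.mem_iUnion.2 ⟨0, zero_mem_nabla hnabla 0⟩
    · obtain ⟨i, hi1, hi2⟩ := dichotomy hlat h0 hrefl (hlatS s hs) hs0 hspd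
      refine Set.mem_iUnion.2 ⟨i, ?_⟩
      rw [mem_nabla_iff hnabla hlat h0]
      intro l
      by_cases hl : l = i
      · subst hl; rw [if_pos rfl, hi1]
      · rw [if_neg hl, hi2 l hl, neg_zero]
  · apply convexHull_min _ (convex_polarDual (∑ i, Δ i))
    rw [Set.iUnion_subset_iff]
    exact fun i => nabla_subset_polar hnabla hlat h0 hrefl.1 i


lemma decomp (hlat : ∀ i, IsLatticePolytope (Δ i)) (h0 : ∀ i, (0 : Fin d → ℝ) ∈ Δ i)
    (hrefl : IsReflexive (∑ i, Δ i)) (y : Fin d → ℝ) :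
    ∃ (ιt : Type) (_ : Fintype ιt) (β : ιt → ℝ) (w : ιt → (Fin d → ℝ)) (ν : ιt → Fin (k+1)),
      (∀ α, 0 ≤ β α) ∧ (∀ α, w α ∈ nabla (ν α)) ∧ (y = ∑ α, β α • w α) ∧
      (∀ i : Fin (k+1), ∑ α ∈ Finset.univ.filter (fun α => ν α = i), β α
          = -(minPair (Δ i) y)) := by
  classical
  have hlatP := hrefl.1
  have h0tot : (0 : Fin d → ℝ) ∈ ∑ i, Δ i := zero_mem_tot h0
  set r : ℝ := -(minPair (∑ i, Δ i) y) with hrdef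
  rcases eq_or_lt_of_le (neg_nonneg.2 (minPair_nonpos hlatP h0tot y)) with hre | hrpos
  · -- r = 0, so y = 0
    have hy0 : y = 0 := eq_zero_of_minPair_nonneg hrefl (by linarith [hre])
    subst hy0
    refine ⟨Fin 0, inferInstance, fun a => a.elim0, fun a => a.elim0, fun a => a.elim0,
      fun a => a.elim0, fun a => a.elim0, by simp, fun i => ?_⟩
    rw [minPair_zero_right (hlat i) ⟨0, h0 i⟩, neg_zero]
    simp
  · have hrne : r ≠ 0 := ne_of_gt hrpos
    have hy' : minPair (∑ i, Δ i) (r⁻¹ • y) = -1 := by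
      rw [minPair_smul_right hlatP ⟨0, h0tot⟩ (inv_nonneg.2 hrpos.le)]
      have hm : minPair (∑ i, Δ i) y = -r := by rw [hrdef]; ring
      rw [hm]
      field_simp
    have hy'pd : r⁻¹ • y ∈ polarDual (∑ i, Δ i) :=
      (mem_polarDual_iff hlatP h0).2 (by rw [hy'])
    have hy'conv : r⁻¹ • y ∈ convexHull ℝ (⋃ i, nabla i) := by
      rw [← lemmaB hnabla hlat h0 hrefl]; exact hy'pd
    rw [mem_convexHull_iff_exists_fintype] at hy'conv
    obtain ⟨ιt, hft, lam, z, hlam0, hlam1, hz, hzsum⟩ := hy'conv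
    have hchoice : ∀ α, ∃ i, z α ∈ nabla i := fun α => Set.mem_iUnion.1 (hz α)
    choose ν hν using hchoice
    obtain ⟨c, hcdef⟩ : ∃ c : ιt → ℝ, c = fun α => -(minPair (Δ (ν α)) (z α)) := ⟨_, rfl⟩
    have hcval : ∀ α, c α = -(minPair (Δ (ν α)) (z α)) := fun α => by rw [hcdef]
    have hc0 : ∀ α, 0 ≤ c α := fun α => by
      rw [hcval α]
      exact neg_nonneg.2 (minPair_nonpos (hlat (ν α)) (h0 (ν α)) (z α))
    have hc1 : ∀ α, c α ≤ 1 := fun α => by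
      have := nabla_minPair_ge hnabla hlat h0 (hν α)
      rw [hcval α]; linarith
    obtain ⟨w, hwdef⟩ : ∃ w : ιt → (Fin d → ℝ),
        w = fun α => if c α = 0 then 0 else (c α)⁻¹ • z α := ⟨_, rfl⟩
    have hwval : ∀ α, w α = if c α = 0 then 0 else (c α)⁻¹ • z α := fun α => by rw [hwdef]
    have hw_mem : ∀ α, w α ∈ nabla (ν α) := by
      intro α
      rw [hwval α]
      by_cases h : c α = 0
      · rw [if_pos h]; exact zero_mem_nabla hnabla (ν α)
      · rw [if_neg h]
        exact nabla_scale hnabla hlat h0 (hν α) (lt_of_le_of_ne (hc0 α) (Ne.symm h))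
          (by rw [hcval α] at h ⊢; linarith [neg_neg (minPair (Δ (ν α)) (z α))])
    have hcw : ∀ α, c α • w α = z α := by
      intro α
      rw [hwval α]
      by_cases h : c α = 0
      · rw [if_pos h, smul_zero]
        have hmz : minPair (Δ (ν α)) (z α) = 0 := by
          have := hcval α; rw [h] at this; linarith
        exact (nabla_eq_zero hnabla hlat h0 hrefl (hν α) hmz).symm
      · rw [if_neg h, smul_inv_smul₀ h]
    obtain ⟨β, hβdef⟩ : ∃ β : ιt → ℝ, β = fun α => r * lam α * c α := ⟨_, rfl⟩
    have hβval : ∀ α, β α = r * lam α * c α := fun α => by rw [hβdef]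
    have hβ0 : ∀ α, 0 ≤ β α := fun α => by
      rw [hβval α]
      exact mul_nonneg (mul_nonneg hrpos.le (hlam0 α)) (hc0 α)
    have hy_eq : y = ∑ α, β α • w α := by
      have h1 : y = r • (r⁻¹ • y) := (smul_inv_smul₀ hrne y).symm
      rw [h1, ← hzsum, Finset.smul_sum]
      refine Finset.sum_congr rfl fun α _ => ?_
      rw [hβval α, ← hcw α, smul_smul, smul_smul, mul_assoc]
    have hkey : ∀ i : Fin (k+1),
        -(∑ α ∈ Finset.univ.filter (fun α => ν α = i), β α) ≤ minPair (Δ i) y := by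
      intro i
      refine le_minPair ⟨0, h0 i⟩ fun x hx => ?_
      rw [hy_eq, pairing_sum_right]
      have heq : -(∑ α ∈ Finset.univ.filter (fun α => ν α = i), β α)
          = ∑ α, β α * (if ν α = i then (-1:ℝ) else 0) := by
        rw [← Finset.sum_neg_distrib, Finset.sum_filter]
        exact Finset.sum_congr rfl fun α _ => by by_cases h : ν α = i <;> simp [h]
      rw [heq]
      refine Finset.sum_le_sum fun α _ => ?_
      rw [pairing_smul_right]
      have hminw : (if ν α = i then (-1:ℝ) else 0) ≤ minPair (Δ i) (w α) := by
        have hnw := (mem_nabla_iff hnabla hlat h0).1 (hw_mem α) i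
        by_cases h : ν α = i
        · rw [if_pos h, if_pos h.symm] at *
          linarith [hnw]
        · rw [if_neg h]
          rw [if_neg (fun hh => h hh.symm)] at hnw
          linarith [hnw]
      exact mul_le_mul_of_nonneg_left (hminw.trans (minPair_le (hlat i) hx (w α))) (hβ0 α)
    have hsum_t : ∑ i : Fin (k+1), ∑ α ∈ Finset.univ.filter (fun α => ν α = i), β α
        = ∑ α, β α :=
      Finset.sum_fiberwise_of_maps_to (fun α _ => Finset.mem_univ (ν α)) β
    have hβsum_le : ∑ α, β α ≤ r := by
      calc ∑ α, β α ≤ ∑ α, r * lam α := Finset.sum_le_sum fun α _ => by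
            rw [hβval α]
            exact mul_le_of_le_one_right (mul_nonneg hrpos.le (hlam0 α)) (hc1 α)
      _ = r := by rw [← Finset.mul_sum, hlam1, mul_one]
    have hsum_c : ∑ i : Fin (k+1), -(minPair (Δ i) y) = r := by
      rw [Finset.sum_neg_distrib, ← minPair_tot_sum hlat h0 hlatP, hrdef]
    have hge : ∀ i : Fin (k+1),
        -(minPair (Δ i) y) ≤ ∑ α ∈ Finset.univ.filter (fun α => ν α = i), β α :=
      fun i => by linarith [hkey i]
    have hnonneg : ∀ i ∈ Finset.univ, (0:ℝ) ≤
        (∑ α ∈ Finset.univ.filter (fun α => ν α = i), β α) - (-(minPair (Δ i) y)) :=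
      fun i _ => sub_nonneg.2 (hge i)
    have hle_total : ∑ i : Fin (k+1),
        ((∑ α ∈ Finset.univ.filter (fun α => ν α = i), β α) - (-(minPair (Δ i) y))) ≤ 0 := by
      rw [Finset.sum_sub_distrib, hsum_t, hsum_c]
      linarith [hβsum_le]
    have hz' := (Finset.sum_eq_zero_iff_of_nonneg hnonneg).1
      (le_antisymm hle_total (Finset.sum_nonneg hnonneg))
    refine ⟨ιt, hft, β, w, ν, hβ0, hw_mem, hy_eq, fun i => ?_⟩
    have := hz' i (Finset.mem_univ i)
    linarith

end Main


lemma smul_single {m : ℕ} (c : ℝ) (i : Fin m) :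
    c • (Pi.single i 1 : Fin m → ℝ) = (Pi.single i c : Fin m → ℝ) := by
  funext j
  simp [Pi.single_apply, mul_ite]

lemma sum_smul_single {m : ℕ} (f : Fin m → ℝ) :
    ∑ i, f i • (Pi.single i 1 : Fin m → ℝ) = f := by
  have : ∀ i : Fin m, f i • (Pi.single i 1 : Fin m → ℝ) = (Pi.single i (f i) : Fin m → ℝ) :=
    fun i => smul_single _ _
  rw [Finset.sum_congr rfl fun i _ => this i]
  exact Finset.univ_sum_single f

lemma pairingV_add_right {d k : ℕ} (x y z : Vdk d k) :
    pairingV x (y + z) = pairingV x y + pairingV x z := by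
  simp only [pairingV, Prod.fst_add, Prod.snd_add, pairing_add_right]
  ring

lemma pairingV_smul_right {d k : ℕ} (t : ℝ) (x y : Vdk d k) :
    pairingV x (t • y) = t * pairingV x y := by
  simp only [pairingV, Prod.smul_fst, Prod.smul_snd, pairing_smul_right]
  ring

lemma convex_dualConeV {d k : ℕ} (σ : Set (Vdk d k)) : Convex ℝ (dualConeV σ) := by
  intro y hy z hz a b ha hb hab
  intro x hx
  have h1 := hy x hx
  have h2 := hz x hx
  rw [pairingV_add_right, pairingV_smul_right, pairingV_smul_right]
  have := add_le_add (mul_le_mul_of_nonneg_left h1 ha) (mul_le_mul_of_nonneg_left h2 hb)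
  simpa using this

lemma smul_mem_dualConeV {d k : ℕ} {σ : Set (Vdk d k)} {y : Vdk d k} {t : ℝ}
    (ht : 0 ≤ t) (hy : y ∈ dualConeV σ) : t • y ∈ dualConeV σ := by
  intro x hx
  rw [pairingV_smul_right]
  exact mul_nonneg ht (hy x hx)

section Main2

variable {d k : ℕ} {Δ : Fin (k+1) → Set (Fin d → ℝ)}

lemma mem_cayley (h0 : ∀ i, (0 : Fin d → ℝ) ∈ Δ i) {i : Fin (k+1)} {x : Fin d → ℝ}
    (hx : x ∈ Δ i) : ((x, Pi.single i 1) : Vdk d (k+1)) ∈ cayleyCone Δ := by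
  classical
  constructor
  · intro j
    simp only [Pi.single_apply]
    split <;> norm_num
  · show x ∈ ∑ j, (Pi.single i 1 : Fin (k+1) → ℝ) j • Δ j
    rw [Set.mem_fintype_sum]
    refine ⟨fun j => if j = i then x else 0, fun j => ?_, by simp⟩
    by_cases h : j = i
    · subst h
      simp only [if_pos rfl, Pi.single_eq_same]
      exact Set.mem_smul_set.2 ⟨x, hx, one_smul ℝ x⟩
    · simp only [if_neg h, Pi.single_eq_of_ne h]
      exact Set.mem_smul_set.2 ⟨0, h0 j, smul_zero _⟩

lemma dual_cayley_iff (hlat : ∀ i, IsLatticePolytope (Δ i)) (h0 : ∀ i, (0 : Fin d → ℝ) ∈ Δ i)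
    {y : Vdk d (k+1)} :
    y ∈ dualConeV (cayleyCone Δ) ↔
      ∀ i : Fin (k+1), 0 ≤ y.2 i ∧ -(y.2 i) ≤ minPair (Δ i) y.1 := by
  constructor
  · intro hdual i
    have hall : ∀ x ∈ Δ i, 0 ≤ pairing x y.1 + y.2 i := by
      intro x hx
      have := hdual _ (mem_cayley h0 hx)
      rwa [pairingV, pairing_single_left] at this
    constructor
    · have := hall 0 (h0 i)
      rwa [pairing_zero_left, zero_add] at this
    · exact le_minPair ⟨0, h0 i⟩ fun x hx => by linarith [hall x hx]
  · rintro h p ⟨hp2, hp1⟩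
    rw [Set.mem_fintype_sum] at hp1
    obtain ⟨g, hg, hgsum⟩ := hp1
    have hgform : ∀ j, ∃ ξ ∈ Δ j, g j = p.2 j • ξ := by
      intro j
      obtain ⟨ξ, hξ, hξeq⟩ := Set.mem_smul_set.1 (hg j)
      exact ⟨ξ, hξ, hξeq.symm⟩
    choose ξ hξ hξeq using hgform
    have h1 : pairing p.1 y.1 = ∑ j, p.2 j * pairing (ξ j) y.1 := by
      rw [← hgsum, pairing_sum_left]
      exact Finset.sum_congr rfl fun j _ => by rw [hξeq j, pairing_smul_left]
    have h2 : ∀ j, p.2 j * (-(y.2 j)) ≤ p.2 j * pairing (ξ j) y.1 := fun j =>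
      mul_le_mul_of_nonneg_left ((h j).2.trans (minPair_le (hlat j) (hξ j) y.1)) (hp2 j)
    have h3 : pairing p.2 y.2 = ∑ j, p.2 j * y.2 j := rfl
    rw [pairingV, h1, h3]
    have := Finset.sum_le_sum fun j (_ : j ∈ Finset.univ) => h2 j
    have hneg : ∑ j, p.2 j * (-(y.2 j)) = -∑ j, p.2 j * y.2 j := by
      rw [← Finset.sum_neg_distrib]
      exact Finset.sum_congr rfl fun j _ => by ring
    rw [hneg] at this
    linarith

lemma nshift_zero {k : ℕ} : (nshift 0 : Fin k → ℝ) = 0 := by simp [nshift]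

lemma nshift_succ {k : ℕ} (i : Fin k) : (nshift i.succ : Fin k → ℝ) = Pi.single i 1 := by
  simp [nshift]

end Main2

end NefAux

open NefAux

/-- for a nef-partition `Δ = Δ₀ + ⋯ + Δ_k` with dual nef-partition
`∇ = ∇₀ + ⋯ + ∇_k`: (i) minima of `Δⱼ` at nonzero lattice points of `∇ᵢ`;
(ii) `σ̄∨ = ℝ≥0·Conv(∇₀ + r₀*, …, ∇_k + r_k*)`;
(iii) `Conv({u − Σᵢ₌₁ᵏ min⟨Δᵢ,u⟩eᵢ* : u ∈ Δ*} ∪ {e₁*, …, e_k*}) = Conv(∇₀, ∇₁+e₁*, …, ∇_k+e_k*)`. -/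
theorem nef_partition_dual_cayley {d k : ℕ}
    (Δ : Fin (k+1) → Set (Fin d → ℝ))
    (hlat : ∀ i, IsLatticePolytope (Δ i))
    (h0 : ∀ i, (0 : Fin d → ℝ) ∈ Δ i)
    (hrefl : IsReflexive (∑ i, Δ i))
    -- the dual nef-partition: ∇ⱼ = {y : ⟨x,y⟩ ≥ −δᵢⱼ ∀ x ∈ Δᵢ, i = 0,…,k}
    (nabla : Fin (k+1) → Set (Fin d → ℝ))
    (hnabla : nabla = fun j =>
        {y | ∀ i, ∀ x ∈ Δ i, -(if i = j then (1 : ℝ) else 0) ≤ pairing x y}) :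
    -- (i)
    (∀ i, ∀ u ∈ nabla i, IsLatticePt u → u ≠ 0 →
      (∀ j, j ≠ i → minPair (Δ j) u = 0) ∧ minPair (Δ i) u = -1) ∧
    -- (ii) σ̄∨ = ℝ≥0 · Conv(∇₀ + r₀*, ∇₁ + r₁*, …, ∇_k + r_k*)
    (dualConeV (cayleyCone Δ) =
      {y : Vdk d (k+1) | ∃ t : ℝ, 0 ≤ t ∧ ∃ x ∈ convexHull ℝ
          (⋃ i : Fin (k+1), (fun u => ((u, Pi.single i 1) : Vdk d (k+1))) '' nabla i),
        y = t • x}) ∧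
    -- (iii)
    convexHull ℝ
        ((fun u => ((u, fun i : Fin k => -(minPair (Δ i.succ) u)) : Vdk d k)) ''
            polarDual (∑ i, Δ i) ∪
          ⋃ i : Fin k, {(((0 : Fin d → ℝ), Pi.single i 1) : Vdk d k)}) =
      convexHull ℝ (⋃ i : Fin (k+1), (fun u => ((u, nshift i) : Vdk d k)) '' nabla i) := by
  classical
  refine ⟨?_, ?_, ?_⟩
  · -- Part (i)
    intro i u hu hulat hune
    refine ⟨fun j hj => nabla_minPair_zero hnabla hlat h0 hu hj, ?_⟩
    obtain ⟨i', h1, h2⟩ := dichotomy hlat h0 hrefl hulat hune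
      (nabla_subset_polar hnabla hlat h0 hrefl.1 i hu)
    by_cases h : i' = i
    · exact h ▸ h1
    · have hz := nabla_minPair_zero hnabla hlat h0 hu h
      rw [hz] at h1
      norm_num at h1
  · -- Part (ii)
    ext y
    simp only [Set.mem_setOf_eq]
    constructor
    · intro hdual
      have hs := (dual_cayley_iff hlat h0).1 hdual
      have hT0 : 0 ≤ ∑ i, y.2 i := Finset.sum_nonneg fun i _ => (hs i).1
      rcases eq_or_lt_of_le hT0 with hTe | hTpos
      · -- total mass 0 : y = 0
        have hy2 : ∀ i, y.2 i = 0 := fun i =>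
          (Finset.sum_eq_zero_iff_of_nonneg (fun i _ => (hs i).1)).1 hTe.symm i
            (Finset.mem_univ i)
        have hy1 : y.1 = 0 := by
          apply eq_zero_of_minPair_nonneg hrefl
          rw [minPair_tot_sum hlat h0 hrefl.1]
          refine Finset.sum_nonneg fun i _ => ?_
          have := (hs i).2
          rw [hy2 i] at this
          linarith
        refine ⟨0, le_refl 0, ((0 : Fin d → ℝ), Pi.single 0 1), ?_, ?_⟩
        · exact subset_convexHull ℝ _
            (Set.mem_iUnion.2 ⟨0, Set.mem_image_of_mem _ (zero_mem_nabla hnabla 0)⟩)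
        · rw [zero_smul]
          exact Prod.ext hy1 (funext hy2)
      · -- total mass positive
        set T := ∑ i, y.2 i with hTdef
        obtain ⟨ιt, hft, β, w, ν, hβ0, hwmem, hyeq, hfib⟩ := decomp hnabla hlat h0 hrefl y.1
        refine ⟨T, hT0, T⁻¹ • y, ?_, (smul_inv_smul₀ (ne_of_gt hTpos) y).symm⟩
        apply mem_convexHull_of_exists_fintype
          (Sum.elim (fun α : ιt => β α / T)
            (fun i : Fin (k+1) => (y.2 i + minPair (Δ i) y.1) / T))
          (Sum.elim (fun α : ιt => ((w α, Pi.single (ν α) 1) : Vdk d (k+1)))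
            (fun i : Fin (k+1) => (((0 : Fin d → ℝ), Pi.single i 1) : Vdk d (k+1))))
        · rintro (α | i)
          · exact div_nonneg (hβ0 α) hT0
          · refine div_nonneg ?_ hT0
            have := (hs i).2
            linarith
        · rw [Fintype.sum_sum_type]
          simp only [Sum.elim_inl, Sum.elim_inr]
          have h1 : ∑ α, β α = ∑ i : Fin (k+1), -(minPair (Δ i) y.1) := by
            rw [← Finset.sum_fiberwise_of_maps_to (fun α _ => Finset.mem_univ (ν α)) β]
            exact Finset.sum_congr rfl fun i _ => hfib i
          rw [← Finset.sum_div, ← Finset.sum_div, h1, ← add_div]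
          have hnum : ∑ i : Fin (k+1), -(minPair (Δ i) y.1)
              + ∑ i : Fin (k+1), (y.2 i + minPair (Δ i) y.1) = T := by
            rw [Finset.sum_add_distrib, Finset.sum_neg_distrib, hTdef]
            ring
          rw [hnum, div_self (ne_of_gt hTpos)]
        · rintro (α | i)
          · exact Set.mem_iUnion.2 ⟨ν α, Set.mem_image_of_mem _ (hwmem α)⟩
          · exact Set.mem_iUnion.2 ⟨i, Set.mem_image_of_mem _ (zero_mem_nabla hnabla i)⟩
        · refine Prod.ext ?_ ?_
          · rw [Prod.fst_sum, Fintype.sum_sum_type]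
            simp only [Prod.smul_fst, Sum.elim_inl, Sum.elim_inr, smul_zero,
              Finset.sum_const_zero, add_zero]
            rw [hyeq, Finset.smul_sum]
            exact Finset.sum_congr rfl fun α _ => by
              rw [smul_smul, div_eq_inv_mul]
          · rw [Prod.snd_sum, Fintype.sum_sum_type]
            simp only [Prod.smul_snd, Sum.elim_inl, Sum.elim_inr]
            have hfib2 : ∑ α, (β α / T) • (Pi.single (ν α) 1 : Fin (k+1) → ℝ)
                = ∑ i : Fin (k+1),
                    (-(minPair (Δ i) y.1) / T) • (Pi.single i 1 : Fin (k+1) → ℝ) := by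
              rw [← Finset.sum_fiberwise_of_maps_to (fun α _ => Finset.mem_univ (ν α))
                    (fun α => (β α / T) • (Pi.single (ν α) 1 : Fin (k+1) → ℝ))]
              refine Finset.sum_congr rfl fun i _ => ?_
              rw [Finset.sum_congr rfl
                    (fun α hα => by rw [(Finset.mem_filter.1 hα).2] :
                      ∀ α ∈ Finset.univ.filter (fun α => ν α = i),
                        (β α / T) • (Pi.single (ν α) 1 : Fin (k+1) → ℝ)
                          = (β α / T) • (Pi.single i 1 : Fin (k+1) → ℝ)),
                  ← Finset.sum_smul, ← Finset.sum_div, hfib i]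
            rw [hfib2, ← Finset.sum_add_distrib]
            have hterm : ∀ i : Fin (k+1),
                (-(minPair (Δ i) y.1) / T) • (Pi.single i 1 : Fin (k+1) → ℝ)
                + ((y.2 i + minPair (Δ i) y.1) / T) • (Pi.single i 1 : Fin (k+1) → ℝ)
                = (y.2 i / T) • (Pi.single i 1 : Fin (k+1) → ℝ) := by
              intro i
              rw [← add_smul]
              congr 1
              ring
            rw [Finset.sum_congr rfl fun i _ => hterm i]
            rw [sum_smul_single (fun i => y.2 i / T)]
            funext j
            simp [div_eq_inv_mul]
    · rintro ⟨t, ht, x, hx, rfl⟩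
      apply smul_mem_dualConeV ht
      refine convexHull_min ?_ (convex_dualConeV _) hx
      rintro p hp
      obtain ⟨i, hpi⟩ := Set.mem_iUnion.1 hp
      obtain ⟨v, hv, rfl⟩ := hpi
      rw [dual_cayley_iff hlat h0]
      intro j
      have hnv := (mem_nabla_iff hnabla hlat h0).1 hv j
      constructor
      · show (0:ℝ) ≤ (Pi.single i 1 : Fin (k+1) → ℝ) j
        rw [Pi.single_apply]
        split <;> norm_num
      · show -((Pi.single i 1 : Fin (k+1) → ℝ) j) ≤ minPair (Δ j) v
        rwa [Pi.single_apply]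
  · -- Part (iii)
    set SA := (fun u => ((u, fun i : Fin k => -(minPair (Δ i.succ) u)) : Vdk d k)) ''
        polarDual (∑ i, Δ i) ∪
        ⋃ i : Fin k, {(((0 : Fin d → ℝ), Pi.single i 1) : Vdk d k)} with hSA
    set SB := ⋃ i : Fin (k+1), (fun u => ((u, nshift i) : Vdk d k)) '' nabla i with hSB
    apply Set.Subset.antisymm
    · refine convexHull_min ?_ (convex_convexHull ℝ _)
      rintro p (hp | hp)
      · obtain ⟨u, hu, rfl⟩ := hp
        obtain ⟨ιt, hft, β, w, ν, hβ0, hwmem, hueq, hfib⟩ := decomp hnabla hlat h0 hrefl u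
        have hsumβ : ∑ α, β α = ∑ i : Fin (k+1), -(minPair (Δ i) u) := by
          rw [← Finset.sum_fiberwise_of_maps_to (fun α _ => Finset.mem_univ (ν α)) β]
          exact Finset.sum_congr rfl fun i _ => hfib i
        have hrle : ∑ i : Fin (k+1), -(minPair (Δ i) u) ≤ 1 := by
          have h1 := (mem_polarDual_iff hrefl.1 h0).1 hu
          rw [Finset.sum_neg_distrib, ← minPair_tot_sum hlat h0 hrefl.1]
          linarith
        apply mem_convexHull_of_exists_fintype
          (Sum.elim β (fun _ : Unit => 1 - ∑ i : Fin (k+1), -(minPair (Δ i) u)))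
          (Sum.elim (fun α => ((w α, nshift (ν α)) : Vdk d k))
            (fun _ : Unit => (((0 : Fin d → ℝ), nshift 0) : Vdk d k)))
        · rintro (α | u')
          · exact hβ0 α
          · simp only [Sum.elim_inr]
            linarith
        · rw [Fintype.sum_sum_type]
          simp only [Sum.elim_inl, Sum.elim_inr]
          rw [hsumβ]
          simp
        · rintro (α | u')
          · exact Set.mem_iUnion.2 ⟨ν α, Set.mem_image_of_mem _ (hwmem α)⟩
          · exact Set.mem_iUnion.2 ⟨0, Set.mem_image_of_mem _ (zero_mem_nabla hnabla 0)⟩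
        · rw [Fintype.sum_sum_type]
          simp only [Sum.elim_inl, Sum.elim_inr]
          refine Prod.ext ?_ ?_
          · rw [Prod.fst_add, Prod.fst_sum, Prod.fst_sum]
            simp only [Prod.smul_fst, smul_zero, Finset.sum_const_zero, add_zero]
            exact hueq.symm
          · rw [Prod.snd_add, Prod.snd_sum, Prod.snd_sum]
            simp only [Prod.smul_snd]
            rw [nshift_zero]
            simp only [smul_zero, Finset.sum_const_zero, add_zero]
            have hfib2 : ∑ α, β α • (nshift (ν α) : Fin k → ℝ)
                = ∑ i : Fin (k+1), (-(minPair (Δ i) u)) • (nshift i : Fin k → ℝ) := by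
              rw [← Finset.sum_fiberwise_of_maps_to (fun α _ => Finset.mem_univ (ν α))
                    (fun α => β α • (nshift (ν α) : Fin k → ℝ))]
              refine Finset.sum_congr rfl fun i _ => ?_
              rw [Finset.sum_congr rfl
                    (fun α hα => by rw [(Finset.mem_filter.1 hα).2] :
                      ∀ α ∈ Finset.univ.filter (fun α => ν α = i),
                        β α • (nshift (ν α) : Fin k → ℝ) = β α • (nshift i : Fin k → ℝ)),
                  ← Finset.sum_smul, hfib i]
            rw [hfib2, Fin.sum_univ_succ, nshift_zero, smul_zero, zero_add]
            have hstep : ∀ j : Fin k, (-(minPair (Δ j.succ) u)) • (nshift j.succ : Fin k → ℝ)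
                = (-(minPair (Δ j.succ) u)) • (Pi.single j 1 : Fin k → ℝ) := fun j => by
              rw [nshift_succ]
            rw [Finset.sum_congr rfl fun j _ => hstep j,
              sum_smul_single (fun j => -(minPair (Δ j.succ) u))]
      · obtain ⟨i, hpi⟩ := Set.mem_iUnion.1 hp
        rw [Set.mem_singleton_iff] at hpi
        subst hpi
        apply subset_convexHull
        refine Set.mem_iUnion.2 ⟨i.succ, ⟨0, zero_mem_nabla hnabla _, ?_⟩⟩
        rw [nshift_succ]
    · refine convexHull_min ?_ (convex_convexHull ℝ _)
      rintro p hp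
      obtain ⟨j, hpj⟩ := Set.mem_iUnion.1 hp
      obtain ⟨v, hv, rfl⟩ := hpj
      rcases Fin.eq_zero_or_eq_succ j with rfl | ⟨i, rfl⟩
      · apply subset_convexHull
        left
        refine ⟨v, nabla_subset_polar hnabla hlat h0 hrefl.1 0 hv, ?_⟩
        dsimp only
        rw [Prod.mk.injEq]
        refine ⟨rfl, ?_⟩
        rw [nshift_zero]
        funext l
        rw [nabla_minPair_zero hnabla hlat h0 hv (Fin.succ_ne_zero l), neg_zero]
        rfl
      · have hc0 : 0 ≤ -(minPair (Δ i.succ) v) :=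
          neg_nonneg.2 (minPair_nonpos (hlat i.succ) (h0 i.succ) v)
        rcases eq_or_lt_of_le hc0 with hce | hcpos
        · have hv0 : v = 0 := nabla_eq_zero hnabla hlat h0 hrefl hv (by linarith)
          subst hv0
          apply subset_convexHull
          right
          refine Set.mem_iUnion.2 ⟨i, ?_⟩
          rw [Set.mem_singleton_iff, nshift_succ]
        · set c := -(minPair (Δ i.succ) v) with hcdef
          have hc1 : c ≤ 1 := by
            have := nabla_minPair_ge hnabla hlat h0 hv
            rw [hcdef]; linarith
          have hvc : c⁻¹ • v ∈ nabla i.succ :=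
            nabla_scale hnabla hlat h0 hv hcpos (by rw [hcdef]; ring)
          have hpd : c⁻¹ • v ∈ polarDual (∑ l, Δ l) :=
            nabla_subset_polar hnabla hlat h0 hrefl.1 i.succ hvc
          have hlabel : (fun l : Fin k => -(minPair (Δ l.succ) (c⁻¹ • v)))
              = (Pi.single i 1 : Fin k → ℝ) := by
            funext l
            rw [minPair_smul_right (hlat l.succ) ⟨0, h0 l.succ⟩ (inv_nonneg.2 hc0)]
            by_cases h : l = i
            · subst h
              rw [Pi.single_eq_same]
              have hmv : minPair (Δ l.succ) v = -c := by rw [hcdef]; ring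
              rw [hmv]
              field_simp
            · rw [Pi.single_eq_of_ne h,
                nabla_minPair_zero hnabla hlat h0 hv
                  (fun hh => h (Fin.succ_injective _ hh))]
              ring
          have hp1 : ((c⁻¹ • v, Pi.single i 1) : Vdk d k) ∈ convexHull ℝ SA := by
            apply subset_convexHull
            left
            refine ⟨c⁻¹ • v, hpd, ?_⟩
            dsimp only
            rw [Prod.mk.injEq]
            exact ⟨rfl, hlabel⟩
          have hp2 : (((0 : Fin d → ℝ), Pi.single i 1) : Vdk d k) ∈ convexHull ℝ SA := by
            apply subset_convexHull
            right
            exact Set.mem_iUnion.2 ⟨i, rfl⟩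
          have heq : ((v, nshift i.succ) : Vdk d k)
              = c • ((c⁻¹ • v, Pi.single i 1) : Vdk d k)
                + (1 - c) • (((0 : Fin d → ℝ), Pi.single i 1) : Vdk d k) := by
            refine Prod.ext ?_ ?_
            · show v = (c • ((c⁻¹ • v, Pi.single i 1) : Vdk d k)
                + (1 - c) • (((0 : Fin d → ℝ), Pi.single i 1) : Vdk d k)).1
              rw [Prod.fst_add, Prod.smul_fst, Prod.smul_fst]
              show v = c • (c⁻¹ • v) + (1 - c) • (0 : Fin d → ℝ)
              rw [smul_inv_smul₀ (ne_of_gt hcpos), smul_zero, add_zero]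
            · show (nshift i.succ : Fin k → ℝ) = (c • ((c⁻¹ • v, Pi.single i 1) : Vdk d k)
                + (1 - c) • (((0 : Fin d → ℝ), Pi.single i 1) : Vdk d k)).2
              rw [Prod.snd_add, Prod.smul_snd, Prod.smul_snd]
              show (nshift i.succ : Fin k → ℝ)
                = c • (Pi.single i 1 : Fin k → ℝ) + (1 - c) • (Pi.single i 1 : Fin k → ℝ)
              rw [nshift_succ, ← add_smul]
              norm_num
          show ((v, nshift i.succ) : Vdk d k) ∈ convexHull ℝ SA
          rw [heq]
          exact (convex_convexHull ℝ SA) hp1 hp2 hcpos.le (by linarith) (by ring)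
end
end

section
/- Let Δ = Δ_0 + Δ_1 + ⋯ + Δ_k be a Minkowski sum decomposition of a reflexive polytope Δ ⊂ ℝ^d into lattice polytopes and σ̄∨ ⊂ ℝ^d ⊕ ℝ^{k+1} the dual of the Cayley cone. If n ∈ Δ* ∩ ℤ^d with n ≠ 0 and α_0, …, α_k ∈ ℝ satisfy α_0 + ⋯ + α_k = 1 and n + Σ_{j=0}^k α_j r_j* ∈ σ̄∨, then α_j = −min⟨Δ_j, n⟩ for every j = 0,…,k. -/
open scoped Pointwise
open Set

noncomputable section

lemma pairing_isLinear {dd : ℕ} (m : Fin dd → ℝ) :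
    IsLinearMap ℝ (fun x : Fin dd → ℝ => pairing x m) := by
  constructor
  · intro x y
    simp [pairing, add_mul, Finset.sum_add_distrib]
  · intro c x
    simp [pairing, Finset.mul_sum, mul_assoc]

lemma pairing_sum {dd : ℕ} {ι : Type*} (s : Finset ι) (g : ι → Fin dd → ℝ)
    (m : Fin dd → ℝ) : pairing (∑ j ∈ s, g j) m = ∑ j ∈ s, pairing (g j) m := by
  classical
  induction s using Finset.induction_on with
  | empty => simp [pairing]
  | insert _ _ h ih =>
    rw [Finset.sum_insert h, (pairing_isLinear m).map_add, ih, Finset.sum_insert h]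

lemma pairing_int {dd : ℕ} {x m : Fin dd → ℝ} (hx : IsLatticePt x)
    (hm : IsLatticePt m) : ∃ z : ℤ, pairing x m = (z : ℝ) := by
  choose zx hzx using hx
  choose zm hzm using hm
  refine ⟨∑ i, zx i * zm i, ?_⟩
  simp only [pairing]
  push_cast
  exact Finset.sum_congr rfl fun i _ => by rw [hzx i, hzm i]

/-- if `n ∈ Δ* ∩ ℤ^d` is nonzero and `n + Σⱼ αⱼrⱼ* ∈ σ̄∨` with
`Σⱼ αⱼ = 1`, then `αⱼ = −min⟨Δⱼ, n⟩` for every `j`. -/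
theorem dual_cone_level_one_coeffs {d k : ℕ}
    (Δ : Fin (k+1) → Set (Fin d → ℝ))
    (hlat : ∀ i, IsLatticePolytope (Δ i))
    (hrefl : IsReflexive (∑ i, Δ i))
    (n : Fin d → ℝ) (hnlat : IsLatticePt n) (hn : n ∈ polarDual (∑ i, Δ i))
    (hne : n ≠ 0)
    (α : Fin (k+1) → ℝ) (hα : ∑ j, α j = 1)
    (hmem : ((n, α) : Vdk d (k+1)) ∈ dualConeV (cayleyCone Δ)) :
    ∀ j, α j = -(minPair (Δ j) n) := by
  classical
  obtain ⟨S, hSfin, hSlat, hSeq⟩ := hrefl.1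
  have h0int := hrefl.2.1
  have h0mem : (0 : Fin d → ℝ) ∈ ∑ i, Δ i := interior_subset h0int
  -- each Δ i is nonempty
  obtain ⟨g0, hg0, -⟩ := (Set.mem_fintype_sum _ _).1 h0mem
  have hne' : ∀ i, (Δ i).Nonempty := fun i => ⟨g0 i, hg0 i⟩
  -- Step B : for x ∈ Δ j, -(α j) ≤ ⟨x, n⟩
  have hB : ∀ j, ∀ x ∈ Δ j, -(α j) ≤ pairing x n := by
    intro j x hx
    have hcone : ((x, Pi.single j 1) : Vdk d (k+1)) ∈ cayleyCone Δ := by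
      constructor
      · intro i
        rcases eq_or_ne i j with rfl | h
        · simp
        · simp [Pi.single_apply, h]
      · refine (Set.mem_fintype_sum _ _).2
          ⟨fun i => if i = j then x else 0, fun i => ?_, by simp⟩
        rcases eq_or_ne i j with rfl | h
        · simpa using Set.mem_smul_set.2 ⟨x, hx, one_smul ℝ x⟩
        · simp only [if_neg h, Pi.single_apply, if_neg h]
          exact Set.mem_smul_set.2 ⟨g0 i, hg0 i, zero_smul ℝ _⟩
    have := hmem _ hcone
    have hps : pairing (Pi.single j (1:ℝ)) α = α j := by
      simp [pairing, Pi.single_apply, ite_mul]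
    simp only [pairingV, hps] at this
    linarith
  -- bounds on minPair
  have hbdd : ∀ j, BddBelow ((fun x => pairing x n) '' Δ j) := fun j =>
    ⟨-(α j), by rintro y ⟨x, hx, rfl⟩; exact hB j x hx⟩
  have hmin_ge : ∀ j, -(α j) ≤ minPair (Δ j) n := fun j =>
    le_csInf ((hne' j).image _) (by rintro y ⟨x, hx, rfl⟩; exact hB j x hx)
  have hmin_le : ∀ j, ∀ x ∈ Δ j, minPair (Δ j) n ≤ pairing x n := fun j x hx =>
    csInf_le (hbdd j) ⟨x, hx, rfl⟩
  -- pairing n n > 0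
  have hnn : 0 < pairing n n := by
    obtain ⟨i0, hi0⟩ : ∃ i, n i ≠ 0 := by
      by_contra h
      push_neg at h
      exact hne (funext h)
    refine Finset.sum_pos' (fun i _ => mul_self_nonneg (n i)) ⟨i0, Finset.mem_univ i0,
      mul_self_pos.2 hi0⟩
  -- a point of Δ with negative pairing
  obtain ⟨ε, hε, hball⟩ := Metric.mem_nhds_iff.1 (mem_interior_iff_mem_nhds.1 h0int)
  have hxneg : ∃ x ∈ ∑ i, Δ i, pairing x n < 0 := by
    set t : ℝ := ε / (2 * (‖n‖ + 1)) with ht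
    have htpos : 0 < t := by positivity
    refine ⟨(-t) • n, hball ?_, ?_⟩
    · rw [Metric.mem_ball, dist_zero_right, norm_smul, norm_neg,
        Real.norm_of_nonneg htpos.le]
      have h1 : ‖n‖ < 2 * (‖n‖ + 1) := by
        have := norm_nonneg n; linarith
      calc t * ‖n‖ < t * (2 * (‖n‖ + 1)) := by
            exact mul_lt_mul_of_pos_left h1 htpos
        _ = ε := by
            rw [ht]; field_simp
    · rw [(pairing_isLinear n).map_smul]
      exact mul_neg_of_neg_of_pos (by linarith) hnn
  obtain ⟨x0, hx0mem, hx0neg⟩ := hxneg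
  -- there is v ∈ S with pairing v n < 0
  have hexv : ∃ v ∈ S, pairing v n < 0 := by
    by_contra h
    push_neg at h
    have hsub : convexHull ℝ S ⊆ {w | 0 ≤ pairing w n} :=
      convexHull_min (fun v hv => h v hv) (convex_halfSpace_ge (pairing_isLinear n) 0)
    have : (0:ℝ) ≤ pairing x0 n := hsub (hSeq ▸ hx0mem)
    linarith
  obtain ⟨v, hvS, hvneg⟩ := hexv
  obtain ⟨z, hz⟩ := pairing_int (hSlat v hvS) hnlat
  have hzneg : z < 0 := by exact_mod_cast hz ▸ hvneg
  have hvle : pairing v n ≤ -1 := by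
    rw [hz]
    exact_mod_cast Int.le_of_lt_add_one (by omega : z < -1 + 1)
  have hvmem : v ∈ ∑ i, Δ i := hSeq ▸ subset_convexHull ℝ S hvS
  obtain ⟨w, hw, hwsum⟩ := (Set.mem_fintype_sum _ _).1 hvmem
  -- Σ minPair ≤ -1
  have hsum_min : ∑ j, minPair (Δ j) n ≤ -1 := by
    calc ∑ j, minPair (Δ j) n ≤ ∑ j, pairing (w j) n :=
          Finset.sum_le_sum fun j _ => hmin_le j (w j) (hw j)
      _ = pairing v n := by rw [← pairing_sum, hwsum]
      _ ≤ -1 := hvle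
  -- conclude
  have hnn0 : ∀ j ∈ Finset.univ, (0:ℝ) ≤ α j + minPair (Δ j) n := fun j _ => by
    have := hmin_ge j; linarith
  have hsum0 : ∑ j, (α j + minPair (Δ j) n) = 0 := by
    have hle : ∑ j, (α j + minPair (Δ j) n) ≤ 0 := by
      rw [Finset.sum_add_distrib, hα]; linarith
    have hge : 0 ≤ ∑ j, (α j + minPair (Δ j) n) := Finset.sum_nonneg hnn0
    linarith
  intro j
  have := (Finset.sum_eq_zero_iff_of_nonneg hnn0).1 hsum0 j (Finset.mem_univ j)
  linarith
end
end

section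
/- Let Δ = Δ_0 + Δ_1 + ⋯ + Δ_k be a Minkowski sum decomposition of a reflexive polytope Δ ⊂ ℝ^d into lattice polytopes, and for each i = 0,…,k let (a_{i,m})_{m ∈ Δ_i ∩ ℤ^d} be complex numbers such that ∏_{i=0}^k (Σ_{m ∈ Δ_i ∩ ℤ^d} |a_{i,m}|) < 1. Set g(t) = 1 − ∏_{i=0}^k (Σ_{m ∈ Δ_i ∩ ℤ^d} a_{i,m} t^m) for t ∈ (ℂ*)^d. Then g does not vanish on the real torus {|t_1| = ⋯ = |t_d| = 1}, and the iterated contour integral (1/(2π√−1)^d) ∮_{|t_1|=1} ⋯ ∮_{|t_d|=1} (1/g(t)) dt_1/t_1 ⋯ dt_d/t_d equals Σ_{l ∈ L} ∏_{i=0}^k [ (Σ_{m ∈ Δ_i ∩ ℤ^d} l_{i,m})! · ∏_{m ∈ Δ_i ∩ ℤ^d} a_{i,m}^{l_{i,m}} / (l_{i,m})! ], the series converging absolutely, where L is the set of families l = (l_{i,m}) of nonnegative integers indexed by i ∈ {0,…,k} and m ∈ Δ_i ∩ ℤ^d such that Σ_{i=0}^k Σ_{m ∈ Δ_i ∩ ℤ^d}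 l_{i,m}·m = 0 in ℤ^d and Σ_{m ∈ Δ_i ∩ ℤ^d} l_{i,m} = Σ_{m ∈ Δ_0 ∩ ℤ^d} l_{0,m} for every i. -/
open scoped Pointwise
open Set

noncomputable section

open Complex MeasureTheory

/-- The lattice points of `P ⊆ ℝ^d`, viewed inside `ℤ^d`. -/
def LP {d : ℕ} (P : Set (Fin d → ℝ)) : Set (Fin d → ℤ) :=
  {m | (fun j => (m j : ℝ)) ∈ P}

/-! ### Auxiliary lemmas -/

lemma LP_finite {d : ℕ} {P : Set (Fin d → ℝ)} (h : IsLatticePolytope P) : (LP P).Finite := by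
  obtain ⟨S, hS, -, rfl⟩ := h
  have hcomp : IsCompact (convexHull ℝ S) := hS.isCompact_convexHull ℝ
  obtain ⟨C, hC⟩ := hcomp.isBounded.subset_closedBall 0
  apply Set.Finite.subset (Set.finite_Icc (fun _ => -⌈C⌉) (fun _ => ⌈C⌉))
  intro m hm
  have h1 : (fun j => (m j : ℝ)) ∈ Metric.closedBall 0 C := hC hm
  rw [Metric.mem_closedBall, dist_zero_right] at h1
  rw [Set.mem_Icc]
  constructor <;> intro j
  · have h2 : |(m j : ℝ)| ≤ C := le_trans (norm_le_pi_norm (fun j => (m j : ℝ)) j) h1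
    have h3 : -C ≤ (m j : ℝ) := neg_le_of_abs_le h2
    have h4 : (-⌈C⌉ : ℝ) ≤ (m j : ℝ) := le_trans (by linarith [Int.le_ceil C]) h3
    exact_mod_cast h4
  · have h2 : |(m j : ℝ)| ≤ C := le_trans (norm_le_pi_norm (fun j => (m j : ℝ)) j) h1
    have h3 : (m j : ℝ) ≤ (⌈C⌉ : ℝ) := le_trans (le_of_abs_le h2) (Int.le_ceil C)
    exact_mod_cast h3

lemma indicator_pi_prod {d : ℕ} (f : Fin d → ℝ → ℂ) (lo hi : Fin d → ℝ) (θ : Fin d → ℝ) :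
    Set.indicator (Set.Icc lo hi) (fun θ => ∏ j, f j (θ j)) θ
      = ∏ j, Set.indicator (Set.Icc (lo j) (hi j)) (f j) (θ j) := by
  rw [← Set.pi_univ_Icc]
  by_cases h : θ ∈ Set.univ.pi fun j => Set.Icc (lo j) (hi j)
  · rw [Set.indicator_of_mem h]
    exact Finset.prod_congr rfl fun j _ => (Set.indicator_of_mem (h j (Set.mem_univ j)) _).symm
  · rw [Set.indicator_of_notMem h]
    rw [Set.mem_pi] at h
    push_neg at h
    obtain ⟨j, -, hj⟩ := h
    exact (Finset.prod_eq_zero (Finset.mem_univ j) (Set.indicator_of_notMem hj _)).symm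

lemma integral_exp_Icc (z : ℤ) :
    ∫ x in Set.Icc (0:ℝ) (2*Real.pi), Complex.exp ((z * Complex.I) * x)
      = if z = 0 then (2*Real.pi : ℂ) else 0 := by
  rw [MeasureTheory.integral_Icc_eq_integral_Ioc,
    ← intervalIntegral.integral_of_le (by positivity : (0:ℝ) ≤ 2*Real.pi)]
  by_cases hz : z = 0
  · simp [hz]
  · have hc : (z:ℂ) * Complex.I ≠ 0 := by simp [hz, Complex.I_ne_zero]
    rw [integral_exp_mul_complex hc, if_neg hz]
    have h1 : (z:ℂ) * Complex.I * ((2*Real.pi : ℝ) : ℂ) = z * (2 * Real.pi * Complex.I) := by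
      push_cast; ring
    rw [h1, Complex.exp_int_mul_two_pi_mul_I]
    simp

/-- The Laurent monomial `t ^ m`. -/
def mon {d : ℕ} (m : Fin d → ℤ) (t : Fin d → ℂ) : ℂ := ∏ j, t j ^ (m j)

lemma mon_add {d : ℕ} {t : Fin d → ℂ} (ht : ∀ j, t j ≠ 0) (u v : Fin d → ℤ) :
    mon (u + v) t = mon u t * mon v t := by
  rw [mon, mon, mon, ← Finset.prod_mul_distrib]
  exact Finset.prod_congr rfl fun j _ => by
    rw [Pi.add_apply, zpow_add₀ (ht j)]

lemma mon_zero {d : ℕ} (t : Fin d → ℂ) : mon 0 t = 1 := by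
  simp [mon]

lemma mon_sum {d : ℕ} {t : Fin d → ℂ} (ht : ∀ j, t j ≠ 0) {ι : Type*} (s : Finset ι)
    (v : ι → Fin d → ℤ) : mon (∑ x ∈ s, v x) t = ∏ x ∈ s, mon (v x) t := by
  classical
  induction s using Finset.induction_on with
  | empty => simp [mon_zero]
  | insert x s' hx ih =>
                    rw [Finset.sum_insert hx, Finset.prod_insert hx, mon_add ht, ih]

lemma mon_nsmul {d : ℕ} {t : Fin d → ℂ} (m : Fin d → ℤ) (e : ℕ) :
    mon (e • m) t = mon m t ^ e := by
  rw [mon, mon, ← Finset.prod_pow]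
  exact Finset.prod_congr rfl fun j _ => by
    rw [Pi.smul_apply, ← zpow_natCast (t j ^ m j), ← zpow_mul, nsmul_eq_mul, mul_comm]

/-- The total lattice weight of a family of exponents. -/
def wvec {d k : ℕ} (S : Fin (k+1) → Finset (Fin d → ℤ))
    (l : Fin (k+1) → (Fin d → ℤ) → ℕ) : Fin d → ℤ := ∑ i, ∑ m ∈ S i, l i m • m

/-- The multinomial coefficient of a term in the expansion of `(∏ i, ∑ m, a i m tᵐ)^n`. -/
def coefC {d k : ℕ} (S : Fin (k+1) → Finset (Fin d → ℤ))
    (a : Fin (k+1) → (Fin d → ℤ) → ℂ) (l : Fin (k+1) → (Fin d → ℤ) → ℕ) : ℂ :=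
  ∏ i, ((Nat.multinomial (S i) (l i) : ℂ) * ∏ m ∈ S i, a i m ^ l i m)

lemma expansion {d k : ℕ} (S : Fin (k+1) → Finset (Fin d → ℤ))
    (a : Fin (k+1) → (Fin d → ℤ) → ℂ) {t : Fin d → ℂ} (ht : ∀ j, t j ≠ 0) (n : ℕ) :
    (∏ i, ∑ m ∈ S i, a i m * mon m t) ^ n
      = ∑ l ∈ Fintype.piFinset (fun i => (S i).piAntidiag n),
          coefC S a l * mon (wvec S l) t := by
  rw [← Finset.prod_pow]
  have h1 : ∀ i, (∑ m ∈ S i, a i m * mon m t) ^ n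
      = ∑ li ∈ (S i).piAntidiag n,
          ((Nat.multinomial (S i) li : ℂ) * ∏ m ∈ S i, (a i m * mon m t) ^ li m) := by
    intro i
    rw [Finset.sum_pow_eq_sum_piAntidiag]
  simp_rw [h1]
  rw [Finset.prod_univ_sum]
  refine Finset.sum_congr rfl fun l hl => ?_
  have h2 : ∀ i, ((Nat.multinomial (S i) (l i) : ℂ) * ∏ m ∈ S i, (a i m * mon m t) ^ l i m)
      = ((Nat.multinomial (S i) (l i) : ℂ) * ∏ m ∈ S i, a i m ^ l i m)
          * mon (∑ m ∈ S i, l i m • m) t := by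
    intro i
    rw [mon_sum ht]
    simp_rw [mul_pow, mon_nsmul]
    rw [Finset.prod_mul_distrib]
    ring
  simp_rw [h2]
  rw [Finset.prod_mul_distrib, coefC, wvec, mon_sum ht]

lemma coef_norm_sum {d k : ℕ} (S : Fin (k+1) → Finset (Fin d → ℤ))
    (a : Fin (k+1) → (Fin d → ℤ) → ℂ) (n : ℕ) :
    ∑ l ∈ Fintype.piFinset (fun i => (S i).piAntidiag n), ‖coefC S a l‖
      = (∏ i, ∑ m ∈ S i, ‖a i m‖) ^ n := by
  rw [← Finset.prod_pow]
  have h1 : ∀ i, (∑ m ∈ S i, ‖a i m‖) ^ n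
      = ∑ li ∈ (S i).piAntidiag n,
          ((Nat.multinomial (S i) li : ℝ) * ∏ m ∈ S i, ‖a i m‖ ^ li m) :=
    fun i => Finset.sum_pow_eq_sum_piAntidiag _ _ n
  simp_rw [h1]
  rw [Finset.prod_univ_sum]
  refine (Finset.sum_congr rfl fun l _ => ?_).symm
  rw [coefC, norm_prod]
  refine Finset.prod_congr rfl fun i _ => ?_
  rw [norm_mul, Complex.norm_natCast, norm_prod]
  simp_rw [norm_pow]

lemma cont_mon_tm {d : ℕ} (m : Fin d → ℤ) :
    Continuous (fun θ : Fin d → ℝ => mon m (torusMap 0 (fun _ => 1) θ)) := by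
  have h : (fun θ : Fin d → ℝ => mon m (torusMap 0 (fun _ => 1) θ))
      = fun θ => ∏ j, Complex.exp ((m j : ℂ) * ((θ j : ℂ) * Complex.I)) := by
    funext θ
    rw [mon]
    refine Finset.prod_congr rfl fun j _ => ?_
    rw [Complex.exp_int_mul]
    congr 1
    simp [torusMap]
  rw [h]
  refine continuous_finset_prod _ fun j _ => Complex.continuous_exp.comp ?_
  exact continuous_const.mul ((Complex.continuous_ofReal.comp (continuous_apply j)).mul
    continuous_const)

lemma cont_Ptm {d k : ℕ} (S : Fin (k+1) → Finset (Fin d → ℤ))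
    (a : Fin (k+1) → (Fin d → ℤ) → ℂ) :
    Continuous (fun θ : Fin d → ℝ =>
      ∏ i, ∑ m ∈ S i, a i m * mon m (torusMap 0 (fun _ => 1) θ)) :=
  continuous_finset_prod _ fun i _ => continuous_finset_sum _ fun m _ =>
    continuous_const.mul (cont_mon_tm m)

lemma integral_mon {d : ℕ} (w : Fin d → ℤ) :
    (∫ θ in Set.Icc (0 : Fin d → ℝ) (fun _ => 2*Real.pi),
        ∏ j, Complex.exp ((θ j : ℂ) * Complex.I) ^ (w j))
      = if w = 0 then ((2*Real.pi : ℂ))^d else 0 := by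
  have h1 : ∀ θ : Fin d → ℝ, (∏ j, Complex.exp ((θ j : ℂ) * Complex.I) ^ (w j))
      = ∏ j, Complex.exp ((w j * Complex.I) * (θ j : ℂ)) := by
    intro θ
    refine Finset.prod_congr rfl fun j _ => ?_
    rw [← Complex.exp_int_mul]
    ring_nf
  simp_rw [h1]
  set f : Fin d → ℝ → ℂ := fun j x => Complex.exp ((w j * Complex.I) * (x : ℂ)) with hf
  have h2 : (∫ θ in Set.Icc (0 : Fin d → ℝ) (fun _ => 2*Real.pi), ∏ j, f j (θ j))
      = ∫ θ : Fin d → ℝ, Set.indicator (Set.Icc (0 : Fin d → ℝ) (fun _ => 2*Real.pi))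
          (fun θ => ∏ j, f j (θ j)) θ := (MeasureTheory.integral_indicator measurableSet_Icc).symm
  rw [h2]
  have h3 : ∀ θ : Fin d → ℝ, Set.indicator (Set.Icc (0 : Fin d → ℝ) (fun _ => 2*Real.pi))
      (fun θ => ∏ j, f j (θ j)) θ
      = ∏ j, Set.indicator (Set.Icc (0:ℝ) (2*Real.pi)) (f j) (θ j) := by
    intro θ
    simpa using indicator_pi_prod f 0 (fun _ => 2*Real.pi) θ
  simp_rw [h3]
  rw [MeasureTheory.integral_fintype_prod_volume_eq_prod
    (fun j x => Set.indicator (Set.Icc (0:ℝ) (2*Real.pi)) (f j) x)]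
  have h4 : ∀ j, (∫ x : ℝ, Set.indicator (Set.Icc (0:ℝ) (2*Real.pi)) (f j) x)
      = if w j = 0 then (2*Real.pi : ℂ) else 0 := by
    intro j
    rw [MeasureTheory.integral_indicator measurableSet_Icc]
    exact integral_exp_Icc (w j)
  simp_rw [h4]
  by_cases hw : w = 0
  · simp [hw]
  · rw [if_neg hw]
    have h5 : ∃ j, w j ≠ 0 := by
      by_contra h
      push_neg at h
      exact hw (funext h)
    obtain ⟨j, hj⟩ := h5
    exact Finset.prod_eq_zero (Finset.mem_univ j) (by rw [if_neg hj])

/-- the main period of the degenerate Calabi–Yau hypersurface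
`g = 1 − ∏ᵢ(Σ_{m ∈ Δᵢ∩ℤ^d} a_{i,m}tᵐ)` equals the hypergeometric series of the
Calabi–Yau complete intersection of the nef-partition `Δ̃₀ + ⋯ + Δ̃_k`. -/
theorem main_period_degeneration {d k : ℕ}
    (Δ : Fin (k+1) → Set (Fin d → ℝ))
    (hlat : ∀ i, IsLatticePolytope (Δ i))
    (hrefl : IsReflexive (∑ i, Δ i))
    (a : Fin (k+1) → (Fin d → ℤ) → ℂ)
    (hsmall : ∏ i, (∑ᶠ m ∈ LP (Δ i), ‖a i m‖) < 1)
    -- g(t) = 1 − ∏ᵢ (Σ_{m ∈ Δᵢ ∩ ℤ^d} a_{i,m} tᵐ)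
    (g : (Fin d → ℂ) → ℂ)
    (hg : g = fun t => 1 - ∏ i, (∑ᶠ m ∈ LP (Δ i), a i m * ∏ j, t j ^ (m j)))
    -- L = {(l_{i,m}) : Σ_{i,m} l_{i,m}·m = 0 and all level sums are equal}
    (L : Set (Fin (k+1) → (Fin d → ℤ) → ℕ))
    (hL : L = {l | (∀ i, ∀ m, m ∉ LP (Δ i) → l i m = 0) ∧
        (∑ i, ∑ᶠ m ∈ LP (Δ i), (l i m) • m) = 0 ∧
        (∀ i, (∑ᶠ m ∈ LP (Δ i), l i m) = ∑ᶠ m ∈ LP (Δ 0), l 0 m)})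
    -- the general term of the hypergeometric series
    (F : (Fin (k+1) → (Fin d → ℤ) → ℕ) → ℂ)
    (hF : F = fun l => ∏ i,
        ((Nat.factorial (∑ᶠ m ∈ LP (Δ i), l i m) : ℂ) *
          ∏ᶠ m ∈ LP (Δ i), (a i m ^ (l i m) / (Nat.factorial (l i m) : ℂ)))) :
    -- g does not vanish on the real torus
    (∀ t : Fin d → ℂ, (∀ j, ‖t j‖ = 1) → g t ≠ 0) ∧
    -- the series converges absolutely
    Summable (fun l : L => ‖F l‖) ∧
    -- the Euler integral equals the hypergeometric series
    (1 / (2 * (Real.pi : ℂ) * Complex.I) ^ d) *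
        (∯ t in T((0 : Fin d → ℂ), fun _ => 1), (g t)⁻¹ * (∏ j, t j)⁻¹) =
      ∑' l : L, F l := by
  classical
  have hfin : ∀ i, (LP (Δ i)).Finite := fun i => LP_finite (hlat i)
  set S : Fin (k+1) → Finset (Fin d → ℤ) := fun i => (hfin i).toFinset with hSdef
  have hconv : ∀ (M : Type) [AddCommMonoid M], ∀ (i : Fin (k+1)) (f : (Fin d → ℤ) → M),
      (∑ᶠ m ∈ LP (Δ i), f m) = ∑ m ∈ S i, f m := by
    intro M _ i f
    rw [← Set.Finite.coe_toFinset (hfin i), finsum_mem_coe_finset]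
  have hconvP : ∀ (i : Fin (k+1)) (f : (Fin d → ℤ) → ℂ),
      (∏ᶠ m ∈ LP (Δ i), f m) = ∏ m ∈ S i, f m := by
    intro i f
    rw [← Set.Finite.coe_toFinset (hfin i), finprod_mem_coe_finset]
  set A : Fin (k+1) → ℝ := fun i => ∑ m ∈ S i, ‖a i m‖ with hAdef
  have hr1 : (∏ i, A i) < 1 := by
    rwa [show (∏ i, (∑ᶠ m ∈ LP (Δ i), ‖a i m‖)) = ∏ i, A i from
      Finset.prod_congr rfl fun i _ => hconv ℝ i _] at hsmall
  have hA0 : ∀ i, 0 ≤ A i := fun i => Finset.sum_nonneg fun m _ => norm_nonneg _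
  have hr0 : (0:ℝ) ≤ ∏ i, A i := Finset.prod_nonneg fun i _ => hA0 i
  set P : (Fin d → ℂ) → ℂ := fun t => ∏ i, ∑ m ∈ S i, a i m * mon m t with hPdef
  have hgP : ∀ t, g t = 1 - P t := by
    intro t
    rw [hg]
    show (1 : ℂ) - _ = 1 - P t
    congr 1
    exact Finset.prod_congr rfl fun i _ => hconv ℂ i (fun m => a i m * ∏ j, t j ^ (m j))
  have hmon_norm : ∀ (t : Fin d → ℂ), (∀ j, ‖t j‖ = 1) → ∀ m, ‖mon m t‖ = 1 := by
    intro t ht m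
    rw [mon, norm_prod]
    refine Finset.prod_eq_one fun j _ => ?_
    rw [norm_zpow, ht j, one_zpow]
  have hP_le : ∀ (t : Fin d → ℂ), (∀ j, ‖t j‖ = 1) → ‖P t‖ ≤ ∏ i, A i := by
    intro t ht
    rw [hPdef]
    simp only
    rw [norm_prod]
    refine Finset.prod_le_prod (fun i _ => norm_nonneg _) fun i _ => ?_
    refine (norm_sum_le _ _).trans (le_of_eq ?_)
    refine Finset.sum_congr rfl fun m _ => ?_
    rw [norm_mul, hmon_norm t ht m, mul_one]
  -- Part 1 : nonvanishing on the torus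
  have hne : ∀ t : Fin d → ℂ, (∀ j, ‖t j‖ = 1) → g t ≠ 0 := by
    intro t ht h0
    rw [hgP, sub_eq_zero] at h0
    have h1 : ‖P t‖ ≤ ∏ i, A i := hP_le t ht
    rw [← h0, norm_one] at h1
    linarith
  -- torus map facts
  set tm : (Fin d → ℝ) → (Fin d → ℂ) := torusMap (0 : Fin d → ℂ) (fun _ => 1) with htmdef
  have htm_apply : ∀ (θ : Fin d → ℝ) j, tm θ j = Complex.exp (θ j * Complex.I) := by
    intro θ j
    simp [htmdef, torusMap]
  have htm_norm : ∀ (θ : Fin d → ℝ) (j : Fin d), ‖tm θ j‖ = 1 := by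
    intro θ j
    rw [htm_apply]
    exact Complex.norm_exp_ofReal_mul_I _
  have htm_ne : ∀ (θ : Fin d → ℝ) (j : Fin d), tm θ j ≠ 0 := by
    intro θ j
    rw [htm_apply]
    exact Complex.exp_ne_zero _
  set TT : Set (Fin d → ℝ) := Set.Icc 0 (fun _ => 2 * Real.pi) with hTTdef
  have hPtm_lt : ∀ θ, ‖P (tm θ)‖ < 1 := fun θ => lt_of_le_of_lt (hP_le _ (htm_norm θ)) hr1
  have hPtm_cont : Continuous (fun θ => P (tm θ)) := cont_Ptm S a
  have hgeo : ∀ θ, (g (tm θ))⁻¹ = ∑' n : ℕ, (P (tm θ)) ^ n := by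
    intro θ
    rw [hgP]
    exact (tsum_geometric_of_norm_lt_one (hPtm_lt θ)).symm
  -- index sets
  set Λ : ℕ → Finset (Fin (k+1) → (Fin d → ℤ) → ℕ) :=
    fun n => Fintype.piFinset (fun i => (S i).piAntidiag n) with hΛdef
  set Λ0 : ℕ → Finset (Fin (k+1) → (Fin d → ℤ) → ℕ) :=
    fun n => (Λ n).filter (fun l => wvec S l = 0) with hΛ0def
  -- the torus integral
  have hTI : (∯ t in T((0 : Fin d → ℂ), fun _ => 1), (g t)⁻¹ * (∏ j, t j)⁻¹)
      = Complex.I ^ d * ∫ θ in TT, (g (tm θ))⁻¹ := by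
    rw [torusIntegral]
    have hpt : ∀ θ : Fin d → ℝ,
        (∏ i : Fin d, ((fun _ => (1:ℝ)) i : ℂ) * Complex.exp (θ i * Complex.I) * Complex.I) •
            ((g (tm θ))⁻¹ * (∏ j, tm θ j)⁻¹)
          = Complex.I ^ d * (g (tm θ))⁻¹ := by
      intro θ
      rw [smul_eq_mul]
      have h1 : (∏ i : Fin d, ((fun _ => (1:ℝ)) i : ℂ) * Complex.exp (θ i * Complex.I) *
          Complex.I) = (∏ j, tm θ j) * Complex.I ^ d := by
        simp only [Complex.ofReal_one, one_mul]
        rw [Finset.prod_mul_distrib, Finset.prod_const, Finset.card_univ, Fintype.card_fin]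
        congr 1
        exact Finset.prod_congr rfl fun j _ => (htm_apply θ j).symm
      rw [h1]
      have h2 : (∏ j, tm θ j) ≠ 0 := Finset.prod_ne_zero_iff.2 fun j _ => htm_ne θ j
      calc (∏ j, tm θ j) * Complex.I ^ d * ((g (tm θ))⁻¹ * (∏ j, tm θ j)⁻¹)
          = Complex.I ^ d * (g (tm θ))⁻¹ * ((∏ j, tm θ j) * (∏ j, tm θ j)⁻¹) := by ring
        _ = Complex.I ^ d * (g (tm θ))⁻¹ := by rw [mul_inv_cancel₀ h2, mul_one]
    rw [show (∫ θ in Set.Icc (0 : Fin d → ℝ) fun _ => 2 * Real.pi,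
        (∏ i : Fin d, ((fun _ => (1:ℝ)) i : ℂ) * Complex.exp (θ i * Complex.I) * Complex.I) •
          ((g (torusMap 0 (fun _ => 1) θ))⁻¹ * (∏ j, torusMap 0 (fun _ => 1) θ j)⁻¹))
        = ∫ θ in TT, Complex.I ^ d * (g (tm θ))⁻¹ from by
      congr 1
      funext θ
      exact hpt θ]
    exact MeasureTheory.integral_const_mul _ _
  have hswap : (∫ θ in TT, (g (tm θ))⁻¹) = ∑' n : ℕ, ∫ θ in TT, (P (tm θ)) ^ n := by
    rw [show (∫ θ in TT, (g (tm θ))⁻¹) = ∫ θ in TT, ∑' n : ℕ, (P (tm θ)) ^ n from by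
      congr 1
      funext θ
      exact hgeo θ]
    refine MeasureTheory.integral_tsum (fun n => ?_) ?_
    · exact ((hPtm_cont.pow n).aestronglyMeasurable).restrict
    · set r' : NNReal := ⟨∏ i, A i, hr0⟩ with hr'def
      have hr'1 : (r' : ENNReal) < 1 := by
        rw [← ENNReal.coe_one, ENNReal.coe_lt_coe]
        exact_mod_cast hr1
      have hVlt : volume TT < ⊤ := isCompact_Icc.measure_lt_top
      have hb : ∀ n : ℕ, (∫⁻ θ in TT, ‖(P (tm θ)) ^ n‖₊)
          ≤ (r' : ENNReal) ^ n * volume TT := by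
        intro n
        calc (∫⁻ θ in TT, ‖(P (tm θ)) ^ n‖₊)
            ≤ ∫⁻ _ in TT, ((r' ^ n : NNReal) : ENNReal) := by
              refine MeasureTheory.lintegral_mono fun θ => ?_
              rw [ENNReal.coe_le_coe, nnnorm_pow]
              refine pow_le_pow_left₀ (by positivity) ?_ n
              have := (hP_le (tm θ) (htm_norm θ))
              rw [← NNReal.coe_le_coe]
              exact this
          _ = (r' : ENNReal) ^ n * volume TT := by
              rw [MeasureTheory.setLIntegral_const, ENNReal.coe_pow]
      refine ne_top_of_le_ne_top ?_ (ENNReal.tsum_le_tsum hb)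
      rw [ENNReal.tsum_mul_right, ENNReal.tsum_geometric]
      refine ENNReal.mul_ne_top ?_ hVlt.ne
      rw [ENNReal.inv_ne_top]
      rw [ne_eq, tsub_eq_zero_iff_le]
      exact not_le.2 hr'1
  have hint_n : ∀ n : ℕ, (∫ θ in TT, (P (tm θ)) ^ n)
      = (2 * (Real.pi:ℂ)) ^ d * ∑ l ∈ Λ0 n, coefC S a l := by
    intro n
    have hexp : ∀ θ : Fin d → ℝ, (P (tm θ)) ^ n
        = ∑ l ∈ Λ n, coefC S a l * mon (wvec S l) (tm θ) :=
      fun θ => expansion S a (htm_ne θ) n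
    rw [show (∫ θ in TT, (P (tm θ)) ^ n)
        = ∫ θ in TT, ∑ l ∈ Λ n, coefC S a l * mon (wvec S l) (tm θ) from by
      congr 1
      funext θ
      exact hexp θ]
    rw [MeasureTheory.integral_finset_sum _ (f := fun l θ => coefC S a l * mon (wvec S l) (tm θ)) (fun l _ =>
      ((continuous_const.mul (cont_mon_tm (wvec S l))).continuousOn).integrableOn_compact
        isCompact_Icc)]
    have hmonint : ∀ l : Fin (k+1) → (Fin d → ℤ) → ℕ,
        (∫ θ in TT, mon (wvec S l) (tm θ))
          = if wvec S l = 0 then ((2*Real.pi : ℂ))^d else 0 := by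
      intro l
      rw [show (∫ θ in TT, mon (wvec S l) (tm θ))
          = ∫ θ in Set.Icc (0 : Fin d → ℝ) (fun _ => 2*Real.pi),
              ∏ j, Complex.exp ((θ j : ℂ) * Complex.I) ^ (wvec S l j) from by
        congr 1
        funext θ
        rw [mon]
        exact Finset.prod_congr rfl fun j _ => by rw [htm_apply θ j]]
      exact integral_mon (wvec S l)
    rw [show (∑ l ∈ Λ n, ∫ θ in TT, coefC S a l * mon (wvec S l) (tm θ))
        = ∑ l ∈ Λ n, coefC S a l * ∫ θ in TT, mon (wvec S l) (tm θ) from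
      Finset.sum_congr rfl fun l _ => MeasureTheory.integral_const_mul _ _]
    simp_rw [hmonint]
    rw [show (∑ l ∈ Λ n, coefC S a l * if wvec S l = 0 then ((2*Real.pi : ℂ))^d else 0)
        = ∑ l ∈ Λ n, if wvec S l = 0 then coefC S a l * ((2*Real.pi : ℂ))^d else 0 from
      Finset.sum_congr rfl fun l _ => by rw [mul_ite, mul_zero]]
    rw [← Finset.sum_filter, ← Finset.sum_mul, mul_comm]
  -- membership lemmas
  have hmemΛ0 : ∀ (n : ℕ) l, l ∈ Λ0 n ↔ (∀ i, l i ∈ (S i).piAntidiag n) ∧ wvec S l = 0 := by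
    intro n l
    rw [hΛ0def]
    simp [hΛdef, Fintype.mem_piFinset, Finset.mem_filter]
  have hL1 : ∀ l, l ∈ L → l ∈ Λ0 (∑ m ∈ S 0, l 0 m) := by
    intro l hl
    rw [hL] at hl
    obtain ⟨hsupp, hzero, heq⟩ := hl
    rw [hmemΛ0]
    refine ⟨fun i => ?_, ?_⟩
    · rw [Finset.mem_piAntidiag]
      refine ⟨?_, fun m hm => ?_⟩
      · calc ∑ m ∈ S i, l i m = ∑ᶠ m ∈ LP (Δ i), l i m := (hconv ℕ i (l i)).symm
          _ = ∑ᶠ m ∈ LP (Δ 0), l 0 m := heq i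
          _ = ∑ m ∈ S 0, l 0 m := hconv ℕ 0 (l 0)
      · by_contra hmem
        exact hm (hsupp i m (fun hmm => hmem ((hfin i).mem_toFinset.2 hmm)))
    · rw [wvec, show (∑ i, ∑ m ∈ S i, l i m • m)
          = ∑ i, ∑ᶠ m ∈ LP (Δ i), l i m • m from
        Finset.sum_congr rfl fun i _ => (hconv (Fin d → ℤ) i (fun m => l i m • m)).symm]
      exact hzero
  have hL2 : ∀ (n : ℕ) l, l ∈ Λ0 n → l ∈ L := by
    intro n l hl
    rw [hmemΛ0] at hl
    obtain ⟨hpi, hw⟩ := hl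
    rw [hL]
    refine ⟨fun i m hm => ?_, ?_, fun i => ?_⟩
    · by_contra h0
      exact hm ((hfin i).mem_toFinset.1 ((Finset.mem_piAntidiag.1 (hpi i)).2 m h0))
    · rw [show (∑ i, ∑ᶠ m ∈ LP (Δ i), l i m • m) = ∑ i, ∑ m ∈ S i, l i m • m from
        Finset.sum_congr rfl fun i _ => hconv (Fin d → ℤ) i (fun m => l i m • m)]
      exact hw
    · rw [hconv ℕ i (l i), hconv ℕ 0 (l 0), (Finset.mem_piAntidiag.1 (hpi i)).1,
        (Finset.mem_piAntidiag.1 (hpi 0)).1]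
  have hL3 : ∀ (n : ℕ) l, l ∈ Λ0 n → n = ∑ m ∈ S 0, l 0 m := by
    intro n l hl
    exact ((Finset.mem_piAntidiag.1 (((hmemΛ0 n l).1 hl).1 0)).1).symm
  have hFc : ∀ (n : ℕ) l, l ∈ Λ0 n → F l = coefC S a l := by
    intro n l hl
    have hpi := ((hmemΛ0 n l).1 hl).1
    rw [hF, coefC]
    refine Finset.prod_congr rfl fun i _ => ?_
    have h1 : (∑ᶠ m ∈ LP (Δ i), l i m) = n := by
      rw [hconv ℕ i (l i)]
      exact (Finset.mem_piAntidiag.1 (hpi i)).1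
    have h2 : ∑ m ∈ S i, l i m = n := (Finset.mem_piAntidiag.1 (hpi i)).1
    rw [h1, hconvP i (fun m => a i m ^ l i m / ((l i m).factorial : ℂ))]
    have hcast : ((n.factorial : ℕ) : ℂ)
        = (Nat.multinomial (S i) (l i) : ℂ) * ∏ m ∈ S i, ((l i m).factorial : ℂ) := by
      rw [← h2, ← Nat.multinomial_spec]
      push_cast
      ring
    rw [Finset.prod_div_distrib, hcast]
    have hne : (∏ m ∈ S i, ((l i m).factorial : ℂ)) ≠ 0 :=
      Finset.prod_ne_zero_iff.2 fun m _ => Nat.cast_ne_zero.2 (Nat.factorial_ne_zero _)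
    field_simp
  -- the equivalence between L and the sigma type
  have hL2' : ∀ (x : Σ n : ℕ, {l // l ∈ Λ0 n}), x.2.1 ∈ L := fun x => hL2 x.1 x.2.1 x.2.2
  set eF : (Σ n : ℕ, {l // l ∈ Λ0 n}) → {l // l ∈ L} := fun x => ⟨x.2.1, hL2' x⟩ with heFdef
  have hbij : Function.Bijective eF := by
    constructor
    · rintro ⟨n, l, hl⟩ ⟨n', l', hl'⟩ h
      have h1 : l = l' := congrArg Subtype.val h
      subst h1
      have h2 : n = n' := by rw [hL3 n l hl, hL3 n' l hl']
      subst h2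
      rfl
    · rintro ⟨l, hl⟩
      exact ⟨⟨∑ m ∈ S 0, l 0 m, ⟨l, hL1 l hl⟩⟩, rfl⟩
  set e := Equiv.ofBijective eF hbij with hedef
  -- summability
  have hnormsum : ∀ n : ℕ, (∑ l ∈ Λ0 n, ‖F l‖) ≤ (∏ i, A i) ^ n := by
    intro n
    rw [Finset.sum_congr rfl (fun l hl => by rw [hFc n l hl] :
      ∀ l ∈ Λ0 n, ‖F l‖ = ‖coefC S a l‖)]
    calc ∑ l ∈ Λ0 n, ‖coefC S a l‖
        ≤ ∑ l ∈ Λ n, ‖coefC S a l‖ :=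
          Finset.sum_le_sum_of_subset_of_nonneg (Finset.filter_subset _ _)
            (fun _ _ _ => norm_nonneg _)
      _ = (∏ i, A i) ^ n := coef_norm_sum S a n
  have hsig : Summable (fun x : Σ n : ℕ, {l // l ∈ Λ0 n} => ‖F x.2.1‖) := by
    refine (summable_sigma_of_nonneg (fun x => norm_nonneg _)).2 ⟨fun n => ?_, ?_⟩
    · exact Summable.of_finite
    · refine Summable.of_nonneg_of_le (fun n => tsum_nonneg fun _ => norm_nonneg _)
        (fun n => ?_) (summable_geometric_of_lt_one hr0 hr1)
      rw [Finset.tsum_subtype (Λ0 n) (fun l => ‖F l‖)]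
      exact hnormsum n
  have hsumL : Summable (fun l : L => ‖F l‖) := by
    refine (Equiv.summable_iff e).1 ?_
    exact hsig
  have hFsig : Summable (fun x : Σ n : ℕ, {l // l ∈ Λ0 n} => F x.2.1) :=
    Summable.of_norm hsig
  have hRHS : (∑' l : L, F l) = ∑' n : ℕ, ∑ l ∈ Λ0 n, coefC S a l := by
    rw [← Equiv.tsum_eq e (fun l : L => F l)]
    have h1 : (fun x : Σ n : ℕ, {l // l ∈ Λ0 n} => F (e x)) = fun x => F x.2.1 := rfl
    rw [show (∑' x : Σ n : ℕ, {l // l ∈ Λ0 n}, F (e x)) = ∑' x : Σ n : ℕ, {l // l ∈ Λ0 n}, F x.2.1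
      from rfl]
    rw [Summable.tsum_sigma hFsig]
    refine tsum_congr fun n => ?_
    rw [Finset.tsum_subtype (Λ0 n) (fun l => F l)]
    exact Finset.sum_congr rfl fun l hl => hFc n l hl
  refine ⟨hne, hsumL, ?_⟩
  rw [hTI, hswap]
  rw [show (∑' n : ℕ, ∫ θ in TT, (P (tm θ)) ^ n)
      = ∑' n : ℕ, (2 * (Real.pi:ℂ)) ^ d * ∑ l ∈ Λ0 n, coefC S a l from tsum_congr hint_n]
  rw [tsum_mul_left, hRHS]
  have hπ : (2 * (Real.pi:ℂ)) ≠ 0 := by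
    simp [Real.pi_ne_zero]
  have hI : (Complex.I : ℂ) ≠ 0 := Complex.I_ne_zero
  set Z := ∑' n : ℕ, ∑ l ∈ Λ0 n, coefC S a l
  rw [mul_pow]
  field_simp
end
end

section
/- Let Δ = Δ_0 + Δ_1 + ⋯ + Δ_k be a Minkowski sum decomposition of a reflexive polytope Δ ⊂ ℝ^d into lattice polytopes. Let σ = {(tΔ, t) : t ≥ 0} ⊂ ℝ^d ⊕ ℝ with dual cone σ∨ ⊂ ℝ^d ⊕ ℝ, and let σ̄ ⊂ ℝ^d ⊕ ℝ^{k+1} be the Cayley cone with dual σ̄∨. The additive monoid homomorphism p : ℤ^d ⊕ ℤ^{k+1} → ℤ^d ⊕ ℤ, (n, α_0, …, α_k) ↦ (n, α_0 + ⋯ + α_k), maps σ̄∨ ∩ (ℤ^d ⊕ ℤ^{k+1}) into σ∨ ∩ (ℤ^d ⊕ ℤ), inducing a ℂ-algebra homomorphism φ : ℂ[σ̄∨ ∩ (ℤ^d ⊕ ℤ^{k+1})] → ℂ[σ∨ ∩ (ℤ^d ⊕ ℤ)] of monoid algebras with φ(χ^y) = χ^{p(y)}. Given arbitrary a_n ∈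 ℂ for n ∈ Δ* ∩ ℤ^d, set f = Σ_{n ∈ Δ* ∩ ℤ^d} a_n χ^{(n,1)} and f̄ = a_0 χ^{r_0*} + Σ_{n ∈ (Δ* ∩ ℤ^d)∖{0}} a_n χ^{n − Σ_{j=0}^k min⟨Δ_j, n⟩ r_j*} (all exponents of f̄ lie in σ̄∨ ∩ (ℤ^d ⊕ ℤ^{k+1})). Then the kernel of the composite ring homomorphism ℂ[σ̄∨ ∩ (ℤ^d ⊕ ℤ^{k+1})] → ℂ[σ∨ ∩ (ℤ^d ⊕ ℤ)] → ℂ[σ∨ ∩ (ℤ^d ⊕ ℤ)]/(f) is the ideal generated by f̄ and the elements χ^{r_i*} − χ^{r_0*} for i = 1,…,k. -/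
open scoped Pointwise
open Set


noncomputable section

/-- The lattice `ℤ^d ⊕ ℤ^{k+1}` (dual lattice `N̄` of the Cayley construction). -/
abbrev Lbar (d k : ℕ) := (Fin d → ℤ) × (Fin (k+1) → ℤ)

/-- The lattice `ℤ^d ⊕ ℤ`. -/
abbrev Lsig (d : ℕ) := (Fin d → ℤ) × ℤ

/-- Realification `ℤ^d ⊕ ℤ^{k+1} → ℝ^d ⊕ ℝ^{k+1}`. -/
def toR {d k : ℕ} (y : Lbar d k) : Vdk d (k+1) :=
  (fun j => (y.1 j : ℝ), fun i => (y.2 i : ℝ))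

/-- Realification `ℤ^d ⊕ ℤ → ℝ^d ⊕ ℝ`. -/
def toRS {d : ℕ} (y : Lsig d) : (Fin d → ℝ) × ℝ :=
  (fun j => (y.1 j : ℝ), (y.2 : ℝ))

/-- The cone `σ = {(tP, t) : t ≥ 0} ⊆ ℝ^d ⊕ ℝ` over a polytope `P`. -/
def coneOver {d : ℕ} (P : Set (Fin d → ℝ)) : Set ((Fin d → ℝ) × ℝ) :=
  {p | 0 ≤ p.2 ∧ p.1 ∈ p.2 • P}

/-- The dual cone of a cone in `ℝ^d ⊕ ℝ`. -/
def dualConeS {d : ℕ} (σ : Set ((Fin d → ℝ) × ℝ)) : Set ((Fin d → ℝ) × ℝ) :=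
  {y | ∀ x ∈ σ, 0 ≤ pairing x.1 y.1 + x.2 * y.2}

/-- The additive monoid `σ̄∨ ∩ (ℤ^d ⊕ ℤ^{k+1})`. -/
def Sbar {d k : ℕ} (Δ : Fin (k+1) → Set (Fin d → ℝ)) : AddSubmonoid (Lbar d k) where
  carrier := {y | toR y ∈ dualConeV (cayleyCone Δ)}
  zero_mem' := by
    intro x hx
    simp [toR, pairingV, pairing]
  add_mem' := by
    intro a b ha hb x hx
    have Ha := ha x hx
    have Hb := hb x hx
    simp only [toR, pairingV, pairing, Prod.fst_add, Prod.snd_add, Pi.add_apply,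
      Int.cast_add, mul_add, Finset.sum_add_distrib] at Ha Hb ⊢
    linarith
/-- The additive monoid `σ∨ ∩ (ℤ^d ⊕ ℤ)`. -/
def Ssig {d : ℕ} (P : Set (Fin d → ℝ)) : AddSubmonoid (Lsig d) where
  carrier := {y | toRS y ∈ dualConeS (coneOver P)}
  zero_mem' := by
    intro x hx
    simp [toRS, pairing]
  add_mem' := by
    intro a b ha hb x hx
    have Ha := ha x hx
    have Hb := hb x hx
    simp only [toRS, pairing, Prod.fst_add, Prod.snd_add, Pi.add_apply,
      Int.cast_add, mul_add, Finset.sum_add_distrib] at Ha Hb ⊢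
    linarith

/-- The lattice projection `p : ℤ^d ⊕ ℤ^{k+1} → ℤ^d ⊕ ℤ`,
`(n, α₀, …, α_k) ↦ (n, α₀ + ⋯ + α_k)`. -/
def pL {d k : ℕ} : Lbar d k →+ Lsig d :=
  AddMonoidHom.mk' (fun y => (y.1, ∑ i, y.2 i)) (by
    intro a b
    ext <;> simp [Finset.sum_add_distrib])

/-- `χ^x ∈ ℂ[S]` for `x ∈ S` (and `0` if `x ∉ S`). -/
def chi {A : Type*} [AddCommMonoid A] (S : AddSubmonoid A) (x : A) :
    AddMonoidAlgebra ℂ S :=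
  letI := Classical.dec (x ∈ S)
  if h : x ∈ S then AddMonoidAlgebra.single (⟨x, h⟩ : S) 1 else 0
/-! ### Auxiliary lemmas -/

section Aux

lemma pairing_add_left {d : ℕ} (x y u : Fin d → ℝ) :
    pairing (x + y) u = pairing x u + pairing y u := by
  simp [pairing, add_mul, Finset.sum_add_distrib]

lemma pairing_smul_left {d : ℕ} (t : ℝ) (x u : Fin d → ℝ) :
    pairing (t • x) u = t * pairing x u := by
  simp [pairing, Finset.mul_sum, mul_assoc]

lemma pairing_sum_left {d : ℕ} {ι : Type*} (s : Finset ι) (g : ι → Fin d → ℝ) (u : Fin d → ℝ) :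
    pairing (∑ j ∈ s, g j) u = ∑ j ∈ s, pairing (g j) u := by
  simp only [pairing, Finset.sum_apply, Finset.sum_mul]
  exact Finset.sum_comm

lemma pairing_continuous {d : ℕ} (u : Fin d → ℝ) :
    Continuous fun x : Fin d → ℝ => pairing x u := by
  unfold pairing
  exact continuous_finset_sum _ fun i _ => (continuous_apply i).mul continuous_const

/-- realification of an integer vector -/
def nR {d : ℕ} (n : Fin d → ℤ) : Fin d → ℝ := fun i => (n i : ℝ)

lemma pairing_nR_zero {d : ℕ} (x : Fin d → ℝ) : pairing x (nR 0) = 0 := by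
  simp [pairing, nR]

end Aux

section Main

variable {d k : ℕ} {Δ : Fin (k+1) → Set (Fin d → ℝ)}
  {Δtot : Set (Fin d → ℝ)}
  {μ : (Fin d → ℤ) → Fin (k+1) → ℤ}

lemma nonempΔ (hΔtot : Δtot = ∑ i, Δ i) (hrefl : IsReflexive Δtot) (j : Fin (k+1)) :
    (Δ j).Nonempty := by
  have h0 : (0 : Fin d → ℝ) ∈ Δtot := interior_subset hrefl.2.1
  rw [hΔtot] at h0
  obtain ⟨g, hg, -⟩ := (Set.mem_finset_sum _ _ _).mp h0
  exact ⟨g j, hg (Finset.mem_univ j)⟩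

lemma compactΔ (hlat : ∀ i, IsLatticePolytope (Δ i)) (j : Fin (k+1)) : IsCompact (Δ j) := by
  obtain ⟨S, hS, -, hP⟩ := hlat j
  rw [hP]
  exact hS.isCompact_convexHull ℝ

lemma bddΔ (hlat : ∀ i, IsLatticePolytope (Δ i)) (j : Fin (k+1)) (u : Fin d → ℝ) :
    BddBelow ((fun x => pairing x u) '' Δ j) :=
  (((compactΔ hlat j).image (pairing_continuous u))).bddBelow

variable (hlat : ∀ i, IsLatticePolytope (Δ i)) (hΔtot : Δtot = ∑ i, Δ i)
  (hrefl : IsReflexive Δtot)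
  (hμ : ∀ n j, (μ n j : ℝ) = minPair (Δ j) (fun i => (n i : ℝ)))

include hlat hμ in
lemma mu_le_pairing (n : Fin d → ℤ) (j : Fin (k+1)) {y : Fin d → ℝ} (hy : y ∈ Δ j) :
    (μ n j : ℝ) ≤ pairing y (nR n) := by
  rw [hμ]
  exact csInf_le (bddΔ hlat j _) ⟨y, hy, rfl⟩

include hlat hΔtot hrefl hμ in
lemma exists_pairing_eq_mu (n : Fin d → ℤ) (j : Fin (k+1)) :
    ∃ y ∈ Δ j, pairing y (nR n) = (μ n j : ℝ) := by
  obtain ⟨y, hy, hmin⟩ := (compactΔ hlat j).exists_isMinOn (nonempΔ hΔtot hrefl j)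
    (pairing_continuous (nR n)).continuousOn
  refine ⟨y, hy, ?_⟩
  rw [hμ]
  refine le_antisymm ?_ (csInf_le (bddΔ hlat j (nR n)) ⟨y, hy, rfl⟩)
  exact le_csInf ⟨_, ⟨y, hy, rfl⟩⟩ (by rintro b ⟨z, hz, rfl⟩; exact hmin hz)

include hΔtot in
lemma mem_Δtot_decomp {y : Fin d → ℝ} (hy : y ∈ Δtot) :
    ∃ g : Fin (k+1) → Fin d → ℝ, (∀ j, g j ∈ Δ j) ∧ y = ∑ j, g j := by
  rw [hΔtot] at hy
  obtain ⟨g, hg, hsum⟩ := (Set.mem_finset_sum _ _ _).mp hy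
  exact ⟨g, fun j => hg (Finset.mem_univ j), hsum.symm⟩

include hlat hΔtot hμ in
lemma sum_mu_le (n : Fin d → ℤ) {y : Fin d → ℝ} (hy : y ∈ Δtot) :
    ((∑ j, μ n j : ℤ) : ℝ) ≤ pairing y (nR n) := by
  obtain ⟨g, hg, rfl⟩ := mem_Δtot_decomp hΔtot hy
  rw [pairing_sum_left]
  push_cast
  exact Finset.sum_le_sum fun j _ => mu_le_pairing hlat hμ n j (hg j)

include hlat hΔtot hrefl hμ in
lemma exists_tot_min (n : Fin d → ℤ) :
    ∃ y ∈ Δtot, pairing y (nR n) = ((∑ j, μ n j : ℤ) : ℝ) := by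
  choose g hg hgm using exists_pairing_eq_mu hlat hΔtot hrefl hμ n
  refine ⟨∑ j, g j, ?_, ?_⟩
  · rw [hΔtot]
    exact (Set.mem_finset_sum _ _ _).mpr ⟨g, fun {j} _ => hg j, rfl⟩
  · rw [pairing_sum_left]
    push_cast
    exact Finset.sum_congr rfl fun j _ => hgm j

end Main
section Cone

variable {d k : ℕ} {Δ : Fin (k+1) → Set (Fin d → ℝ)}
  {Δtot : Set (Fin d → ℝ)}
  {μ : (Fin d → ℤ) → Fin (k+1) → ℤ}
  (hlat : ∀ i, IsLatticePolytope (Δ i)) (hΔtot : Δtot = ∑ i, Δ i)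
  (hrefl : IsReflexive Δtot)
  (hμ : ∀ n j, (μ n j : ℝ) = minPair (Δ j) (fun i => (n i : ℝ)))

lemma mem_Sbar (y : Lbar d k) :
    y ∈ Sbar Δ ↔ ∀ x ∈ cayleyCone Δ, 0 ≤ pairingV x (toR y) := Iff.rfl

lemma mem_Ssig (y : Lsig d) :
    y ∈ Ssig Δtot ↔ ∀ x ∈ coneOver Δtot, 0 ≤ pairing x.1 (toRS y).1 + x.2 * (toRS y).2 :=
  Iff.rfl

include hlat hΔtot hrefl hμ in
lemma mem_Sbar_iff (n : Fin d → ℤ) (α : Fin (k+1) → ℤ) :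
    ((n, α) : Lbar d k) ∈ Sbar Δ ↔ ∀ j, -μ n j ≤ α j := by
  rw [mem_Sbar]
  constructor
  · intro h j
    -- apply to x = (y, e_j) for all y ∈ Δ j
    have key : ∀ y ∈ Δ j, -(α j : ℝ) ≤ pairing y (nR n) := by
      intro y hy
      have hx : ((y, fun t => if t = j then (1:ℝ) else 0) : Vdk d (k+1)) ∈ cayleyCone Δ := by
        constructor
        · intro i; dsimp only; split <;> norm_num
        · refine (Set.mem_finset_sum _ _ _).mpr
            ⟨fun i => if i = j then y else 0, fun {i} _ => ?_, ?_⟩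
          · dsimp only
            by_cases hij : i = j
            · subst hij; simp only [if_pos rfl]
              exact ⟨y, hy, one_smul ℝ y⟩
            · simp only [if_neg hij]
              obtain ⟨w, hw⟩ := nonempΔ hΔtot hrefl i
              exact ⟨w, hw, zero_smul ℝ w⟩
          · simp
      have := h _ hx
      simp only [pairingV, toR, pairing] at this
      have h2 : ∑ t, (if t = j then (1:ℝ) else 0) * ((α t : ℝ)) = (α j : ℝ) := by
        simp [ite_mul]
      simp only [h2] at this
      have : 0 ≤ pairing y (nR n) + (α j : ℝ) := by
        simpa [pairing, nR] using this
      linarith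
    have : -(α j : ℝ) ≤ (μ n j : ℝ) := by
      rw [hμ]
      refine le_csInf ?_ ?_
      · obtain ⟨y, hy⟩ := nonempΔ hΔtot hrefl j
        exact ⟨_, ⟨y, hy, rfl⟩⟩
      · rintro b ⟨z, hz, rfl⟩; exact key z hz
    exact_mod_cast neg_le.mp this
  · intro hα x hx
    obtain ⟨ht, hmem⟩ := hx
    obtain ⟨g, hg, hsum⟩ := (Set.mem_finset_sum _ _ _).mp hmem
    choose y hy hyy using fun i => Set.mem_smul_set.mp (hg (Finset.mem_univ i))
    simp only [pairingV, toR]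
    have hx1 : pairing x.1 (nR n) = ∑ i, x.2 i * pairing (y i) (nR n) := by
      rw [← hsum, pairing_sum_left]
      refine Finset.sum_congr rfl fun i _ => ?_
      rw [← hyy i, pairing_smul_left]
    have h2 : pairing x.2 (fun i => ((α i : ℝ))) = ∑ i, x.2 i * (α i : ℝ) := rfl
    show 0 ≤ pairing x.1 (nR n) + pairing x.2 (fun i => ((α i : ℝ)))
    rw [hx1, h2, ← Finset.sum_add_distrib]
    refine Finset.sum_nonneg fun i _ => ?_
    rw [← mul_add]
    refine mul_nonneg (ht i) ?_
    have h3 : (μ n i : ℝ) ≤ pairing (y i) (nR n) := mu_le_pairing hlat hμ n i (hy i)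
    have h4 : (-(μ n i) : ℝ) ≤ (α i : ℝ) := by exact_mod_cast hα i
    push_cast at h4 ⊢
    linarith

include hlat hΔtot hrefl hμ in
lemma mem_Ssig_iff (n : Fin d → ℤ) (m : ℤ) :
    ((n, m) : Lsig d) ∈ Ssig Δtot ↔ -(∑ j, μ n j) ≤ m := by
  rw [mem_Ssig]
  constructor
  · intro h
    obtain ⟨y, hy, hey⟩ := exists_tot_min hlat hΔtot hrefl hμ n
    have hx : ((y, 1) : (Fin d → ℝ) × ℝ) ∈ coneOver Δtot := by
      exact ⟨zero_le_one, ⟨y, hy, one_smul ℝ y⟩⟩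
    have := h _ hx
    simp only [toRS] at this
    rw [show pairing y (fun i => ((n i : ℝ))) = pairing y (nR n) from rfl, hey] at this
    have : (-(∑ j, μ n j) : ℝ) ≤ (m : ℝ) := by push_cast at this ⊢; linarith
    exact_mod_cast this
  · intro hm x hx
    obtain ⟨ht, hmem⟩ := hx
    obtain ⟨y, hy, hyy⟩ := Set.mem_smul_set.mp hmem
    have h1 : ((∑ j, μ n j : ℤ) : ℝ) ≤ pairing y (nR n) := sum_mu_le hlat hΔtot hμ n hy
    have h2 : (-(∑ j, μ n j) : ℝ) ≤ (m : ℝ) := by exact_mod_cast hm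
    simp only [toRS]
    rw [← hyy, show pairing (x.2 • y) (fun i => ((n i : ℝ))) = x.2 * pairing y (nR n) from
      pairing_smul_left _ _ _]
    have : 0 ≤ x.2 * (pairing y (nR n) + (m : ℝ)) := by
      refine mul_nonneg ht ?_
      push_cast at h1 h2 ⊢
      linarith
    nlinarith [this]

include hlat hΔtot hrefl hμ in
lemma mu_zero (j : Fin (k+1)) : μ 0 j = 0 := by
  obtain ⟨y, -, hey⟩ := exists_pairing_eq_mu hlat hΔtot hrefl hμ 0 j
  rw [pairing_nR_zero] at hey
  exact_mod_cast hey.symm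

omit hlat hΔtot hrefl hμ in
lemma zero_mem_polar : (fun i => ((0 : Fin d → ℤ) i : ℝ)) ∈ polarDual Δtot := by
  intro x hx
  have : pairing x (nR 0) = 0 := pairing_nR_zero x
  rw [show (fun i => (((0 : Fin d → ℤ)) i : ℝ)) = nR 0 from rfl, this]
  norm_num

include hlat hΔtot hrefl hμ in
lemma sum_mu_ge (n : Fin d → ℤ) (hn : (fun i => ((n i : ℝ))) ∈ polarDual Δtot) :
    -1 ≤ ∑ j, μ n j := by
  obtain ⟨y, hy, hey⟩ := exists_tot_min hlat hΔtot hrefl hμ n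
  have h1 : -1 ≤ pairing y (nR n) := hn y hy
  rw [hey] at h1
  exact_mod_cast h1

include hlat hΔtot hrefl hμ in
lemma sum_mu_eq_neg_one (n : Fin d → ℤ) (hn0 : n ≠ 0)
    (hn : (fun i => ((n i : ℝ))) ∈ polarDual Δtot) :
    ∑ j, μ n j = -1 := by
  have hge := sum_mu_ge hlat hΔtot hrefl hμ n hn
  by_contra hne
  have hpos : 0 ≤ ∑ j, μ n j := by omega
  -- then ⟨x, n⟩ ≥ 0 for all x ∈ Δtot
  have hall : ∀ x ∈ Δtot, 0 ≤ pairing x (nR n) := by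
    intro x hx
    have := sum_mu_le hlat hΔtot hμ n hx
    have h0 : (0:ℝ) ≤ ((∑ j, μ n j : ℤ) : ℝ) := by exact_mod_cast hpos
    linarith
  -- small ball around 0 inside Δtot
  have hball := hrefl.2.1
  rw [mem_interior_iff_mem_nhds, Metric.mem_nhds_iff] at hball
  obtain ⟨ε, hε, hsub⟩ := hball
  set c : ℝ := ε / (2 * (‖nR n‖ + 1)) with hc
  have hnorm0 : (0:ℝ) ≤ ‖nR n‖ := norm_nonneg _
  have hcpos : 0 < c := by positivity
  have hxmem : (-c) • nR n ∈ Δtot := by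
    apply hsub
    rw [Metric.mem_ball, dist_zero_right, norm_smul, Real.norm_eq_abs, abs_neg,
      abs_of_pos hcpos]
    calc c * ‖nR n‖ < c * (2 * (‖nR n‖ + 1)) := by
            refine mul_lt_mul_of_pos_left (by linarith) hcpos
      _ = ε := by rw [hc]; exact div_mul_cancel₀ _ (by positivity)
  have hkey := hall _ hxmem
  rw [pairing_smul_left] at hkey
  have hsq : pairing (nR n) (nR n) = ∑ i, ((n i : ℝ))^2 := by
    simp [pairing, nR, sq]
  have hsqnn : 0 ≤ pairing (nR n) (nR n) := by
    rw [hsq]; positivity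
  have hz : pairing (nR n) (nR n) = 0 := by nlinarith
  rw [hsq] at hz
  have : ∀ i ∈ Finset.univ, ((n i : ℝ))^2 = 0 := by
    rw [← Finset.sum_eq_zero_iff_of_nonneg (fun i _ => by positivity)]
    exact hz
  apply hn0
  funext i
  have := this i (Finset.mem_univ i)
  have : ((n i : ℝ)) = 0 := by
    exact pow_eq_zero_iff (n := 2) (by norm_num) |>.mp this
  exact_mod_cast this

include hrefl in
lemma polar_lattice_finite :
    {n : Fin d → ℤ | (fun i => ((n i : ℝ))) ∈ polarDual Δtot}.Finite := by
  obtain ⟨S, hS, -, hP⟩ := hrefl.2.2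
  have hcomp : IsCompact (polarDual Δtot) := by rw [hP]; exact hS.isCompact_convexHull ℝ
  obtain ⟨C, hC⟩ := hcomp.isBounded.exists_norm_le
  refine Set.Finite.subset (Set.finite_Icc (fun _ : Fin d => (-⌈C⌉ : ℤ)) (fun _ => ⌈C⌉)) ?_
  intro n hn
  have hnC : ‖nR n‖ ≤ C := hC _ hn
  constructor <;> intro i <;>
  · have h1 : |(n i : ℝ)| ≤ ‖nR n‖ := by
      have := norm_le_pi_norm (nR n) i
      simpa [nR, Real.norm_eq_abs] using this
    have h2 : |(n i : ℝ)| ≤ (⌈C⌉ : ℝ) := le_trans h1 (le_trans hnC (Int.le_ceil C))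
    rw [abs_le] at h2
    simp only [Pi.le_def]
    first
      | (exact_mod_cast h2.1)
      | (exact_mod_cast h2.2)

end Cone
section Chi

lemma chi_eq {A : Type*} [AddCommMonoid A] {S : AddSubmonoid A} {x : A} (h : x ∈ S) :
    chi S x = AddMonoidAlgebra.single (⟨x, h⟩ : S) 1 := dif_pos h

lemma chi_mul {A : Type*} [AddCommMonoid A] {S : AddSubmonoid A} {x y : A}
    (hx : x ∈ S) (hy : y ∈ S) :
    chi S x * chi S y = chi S (x + y) := by
  rw [chi_eq hx, chi_eq hy, chi_eq (S.add_mem hx hy), AddMonoidAlgebra.single_mul_single]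
  norm_num

end Chi

section KeyL

variable {d k : ℕ} {Δ : Fin (k+1) → Set (Fin d → ℝ)}
  {Δtot : Set (Fin d → ℝ)}
  {μ : (Fin d → ℤ) → Fin (k+1) → ℤ}
  (hlat : ∀ i, IsLatticePolytope (Δ i)) (hΔtot : Δtot = ∑ i, Δ i)
  (hrefl : IsReflexive Δtot)
  (hμ : ∀ n j, (μ n j : ℝ) = minPair (Δ j) (fun i => (n i : ℝ)))

/-- The ideal generated by the differences `χ^{rᵢ*} - χ^{r₀*}`. -/
def Jdiff (Δ : Fin (k+1) → Set (Fin d → ℝ)) : Ideal (AddMonoidAlgebra ℂ (Sbar Δ)) :=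
  Ideal.span (⋃ i : Fin k, {chi (Sbar Δ) ((0 : Fin d → ℤ), Pi.single i.succ 1) -
    chi (Sbar Δ) ((0 : Fin d → ℤ), Pi.single 0 1)})

omit hlat hΔtot hrefl hμ in
lemma gen_mem_J (i : Fin (k+1)) :
    chi (Sbar Δ) ((0 : Fin d → ℤ), Pi.single i 1) -
      chi (Sbar Δ) ((0 : Fin d → ℤ), Pi.single 0 1) ∈ Jdiff Δ := by
  induction i using Fin.cases with
  | zero => simp
  | succ j =>
    exact Ideal.subset_span (Set.mem_iUnion.mpr ⟨j, rfl⟩)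

omit hlat hΔtot hrefl hμ in
lemma diff_gen_mem_J (i j : Fin (k+1)) :
    chi (Sbar Δ) ((0 : Fin d → ℤ), Pi.single i 1) -
      chi (Sbar Δ) ((0 : Fin d → ℤ), Pi.single j 1) ∈ Jdiff Δ := by
  have := sub_mem (gen_mem_J (Δ := Δ) i) (gen_mem_J (Δ := Δ) j)
  simpa using this

include hlat hΔtot hrefl hμ in
lemma single_exp_mem (i : Fin (k+1)) :
    (((0 : Fin d → ℤ), Pi.single i 1) : Lbar d k) ∈ Sbar Δ := by
  rw [mem_Sbar_iff hlat hΔtot hrefl hμ]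
  intro j
  rw [mu_zero hlat hΔtot hrefl hμ]
  rw [Pi.single_apply]
  split <;> omega

include hlat hΔtot hrefl hμ in
lemma keyL (n : Fin d → ℤ) : ∀ (N : ℕ) (α β : Fin (k+1) → ℤ),
    (∑ j, (α j - β j).natAbs) = N →
    (∀ j, -μ n j ≤ α j) → (∀ j, -μ n j ≤ β j) → (∑ j, α j) = (∑ j, β j) →
    chi (Sbar Δ) (n, α) - chi (Sbar Δ) (n, β) ∈ Jdiff Δ := by
  intro N
  induction N using Nat.strong_induction_on with
  | _ N ih =>
    intro α β hN hα hβ hsum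
    by_cases hab : α = β
    · simp [hab]
    · have h1 : ∃ i, β i < α i := by
        by_contra hcon; push_neg at hcon
        exact hab (funext fun i =>
          (Finset.sum_eq_sum_iff_of_le (fun i _ => hcon i)).mp hsum i (Finset.mem_univ i))
      have h2 : ∃ j, α j < β j := by
        by_contra hcon; push_neg at hcon
        exact hab (funext fun i =>
          ((Finset.sum_eq_sum_iff_of_le (fun i _ => hcon i)).mp hsum.symm i
            (Finset.mem_univ i)).symm)
      obtain ⟨i, hi⟩ := h1
      obtain ⟨j, hj⟩ := h2
      have hij : i ≠ j := by intro h; rw [h] at hi; omega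
      set α' : Fin (k+1) → ℤ := α - Pi.single i 1 + Pi.single j 1 with hα'def
      have hα'app : ∀ t, α' t = α t - (if t = i then 1 else 0) + (if t = j then 1 else 0) := by
        intro t
        simp [hα'def, Pi.single_apply]
      have hα' : ∀ t, -μ n t ≤ α' t := by
        intro t
        rw [hα'app]
        rcases eq_or_ne t i with rfl | hti
        · have := hβ t; simp [if_neg (hij)]; omega
        · have := hα t; split <;> split <;> omega
      have hsum' : ∑ t, α' t = ∑ t, β t := by
        rw [← hsum]
        simp [hα'app, Finset.sum_add_distrib, Finset.sum_sub_distrib, Finset.sum_ite_eq']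
      have hmeas : (∑ t, (α' t - β t).natAbs) < N := by
        rw [← hN]
        refine Finset.sum_lt_sum (fun t _ => ?_) ⟨i, Finset.mem_univ i, ?_⟩
        · rw [hα'app]
          rcases eq_or_ne t i with rfl | hti
          · simp [if_neg hij]; omega
          · rcases eq_or_ne t j with rfl | htj
            · have := hβ t; have := hα t; simp [if_neg (Ne.symm hij), hti]; omega
            · simp [hti, htj]
        · rw [hα'app]
          simp [if_neg hij]
          omega
      -- γ = α - e_i
      set γ : Fin (k+1) → ℤ := α - Pi.single i 1 with hγdef
      have hγ : ∀ t, -μ n t ≤ γ t := by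
        intro t
        rcases eq_or_ne t i with rfl | hti
        · have := hβ t
          simp [hγdef, Pi.single_apply]
          omega
        · have := hα t
          simp [hγdef, Pi.single_apply, if_neg hti]
          omega
      have hγmem : ((n, γ) : Lbar d k) ∈ Sbar Δ := (mem_Sbar_iff hlat hΔtot hrefl hμ n γ).mpr hγ
      have hfirst : chi (Sbar Δ) (n, α) - chi (Sbar Δ) (n, α') =
          chi (Sbar Δ) (n, γ) * (chi (Sbar Δ) ((0 : Fin d → ℤ), Pi.single i 1) -
            chi (Sbar Δ) ((0 : Fin d → ℤ), Pi.single j 1)) := by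
        have e1 : ((n, γ) : Lbar d k) + ((0 : Fin d → ℤ), Pi.single i 1) = (n, α) := by
          show ((n + 0, γ + Pi.single i 1) : Lbar d k) = (n, α)
          rw [add_zero]
          congr 1
          simp [hγdef]
        have e2 : ((n, γ) : Lbar d k) + ((0 : Fin d → ℤ), Pi.single j 1) = (n, α') := by
          show ((n + 0, γ + Pi.single j 1) : Lbar d k) = (n, α')
          rw [add_zero]
        rw [mul_sub, chi_mul hγmem (single_exp_mem hlat hΔtot hrefl hμ i),
          chi_mul hγmem (single_exp_mem hlat hΔtot hrefl hμ j), e1, e2]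
      have hrest : chi (Sbar Δ) (n, α') - chi (Sbar Δ) (n, β) ∈ Jdiff Δ :=
        ih _ hmeas α' β rfl hα' hβ hsum'
      have : chi (Sbar Δ) (n, α) - chi (Sbar Δ) (n, β) =
          (chi (Sbar Δ) (n, α) - chi (Sbar Δ) (n, α')) +
            (chi (Sbar Δ) (n, α') - chi (Sbar Δ) (n, β)) := by ring
      rw [this, hfirst]
      exact add_mem (Ideal.mul_mem_left _ _ (diff_gen_mem_J i j)) hrest

include hlat hΔtot hrefl hμ in
lemma diff_mem_J (y z : Lbar d k) (hy : y ∈ Sbar Δ) (hz : z ∈ Sbar Δ)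
    (h1 : y.1 = z.1) (h2 : ∑ t, y.2 t = ∑ t, z.2 t) :
    chi (Sbar Δ) y - chi (Sbar Δ) z ∈ Jdiff Δ := by
  obtain ⟨ny, αy⟩ := y
  obtain ⟨nz, αz⟩ := z
  dsimp at h1 h2
  subst h1
  exact keyL hlat hΔtot hrefl hμ ny _ αy αz rfl
    ((mem_Sbar_iff hlat hΔtot hrefl hμ _ _).mp hy)
    ((mem_Sbar_iff hlat hΔtot hrefl hμ _ _).mp hz) h2

end KeyL
section Psi

variable {d k : ℕ} {Δ : Fin (k+1) → Set (Fin d → ℝ)}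
  {Δtot : Set (Fin d → ℝ)}
  {μ : (Fin d → ℤ) → Fin (k+1) → ℤ}
  (hlat : ∀ i, IsLatticePolytope (Δ i)) (hΔtot : Δtot = ∑ i, Δ i)
  (hrefl : IsReflexive Δtot)
  (hμ : ∀ n j, (μ n j : ℝ) = minPair (Δ j) (fun i => (n i : ℝ)))

/-- a section of `pL` at the level of exponents -/
def secA (μ : (Fin d → ℤ) → Fin (k+1) → ℤ) (n : Fin d → ℤ) (m : ℤ) : Fin (k+1) → ℤ :=
  fun j => (-μ n j) + (if j = 0 then m + ∑ t, μ n t else 0)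

omit hlat hΔtot hrefl hμ in
lemma secA_sum (n : Fin d → ℤ) (m : ℤ) : ∑ j, secA μ n m j = m := by
  simp only [secA, Finset.sum_add_distrib, Finset.sum_neg_distrib, Finset.sum_ite_eq',
    Finset.mem_univ, if_pos]
  ring

include hlat hΔtot hrefl hμ in
lemma secA_mem {n : Fin d → ℤ} {m : ℤ} (hmem : ((n, m) : Lsig d) ∈ Ssig Δtot) :
    ((n, secA μ n m) : Lbar d k) ∈ Sbar Δ := by
  have h := (mem_Ssig_iff hlat hΔtot hrefl hμ n m).mp hmem
  rw [mem_Sbar_iff hlat hΔtot hrefl hμ]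
  intro t
  rcases eq_or_ne t 0 with rfl | ht
  · simp only [secA, if_pos rfl]
    omega
  · simp only [secA, if_neg ht]
    omega

include hlat hΔtot hrefl hμ in
lemma pL_mem {y : Lbar d k} (hy : y ∈ Sbar Δ) : pL y ∈ Ssig Δtot := by
  have h := (mem_Sbar_iff hlat hΔtot hrefl hμ y.1 y.2).mp hy
  show ((y.1, ∑ t, y.2 t) : Lsig d) ∈ Ssig Δtot
  rw [mem_Ssig_iff hlat hΔtot hrefl hμ]
  have : ∑ t, (-μ y.1 t) ≤ ∑ t, y.2 t := Finset.sum_le_sum fun t _ => h t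
  simp only [Finset.sum_neg_distrib] at this
  omega

/-- the monoid homomorphism underlying `ψ` -/
def Fmon : Multiplicative (Ssig Δtot) →* (AddMonoidAlgebra ℂ (Sbar Δ) ⧸ Jdiff Δ) where
  toFun s := Ideal.Quotient.mk (Jdiff Δ)
    (chi (Sbar Δ) ((Multiplicative.toAdd s).val.1,
      secA μ (Multiplicative.toAdd s).val.1 (Multiplicative.toAdd s).val.2))
  map_one' := by
    have h1 : (1 : AddMonoidAlgebra ℂ (Sbar Δ) ⧸ Jdiff Δ) =
        Ideal.Quotient.mk (Jdiff Δ) 1 := (map_one _).symm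
    rw [h1, AddMonoidAlgebra.one_def,
      show (AddMonoidAlgebra.single (0 : Sbar Δ) (1 : ℂ)) = chi (Sbar Δ) 0 from
        (chi_eq ((Sbar Δ).zero_mem)).symm]
    refine Ideal.Quotient.eq.mpr (diff_mem_J hlat hΔtot hrefl hμ _ _ ?_ ?_ rfl ?_)
    · exact secA_mem hlat hΔtot hrefl hμ ((Ssig Δtot).zero_mem)
    · exact (Sbar Δ).zero_mem
    · simpa using secA_sum (μ := μ) 0 0
  map_mul' := by
    intro s t
    rw [← map_mul (Ideal.Quotient.mk (Jdiff Δ)),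
      chi_mul (secA_mem hlat hΔtot hrefl hμ (Multiplicative.toAdd s).2)
        (secA_mem hlat hΔtot hrefl hμ (Multiplicative.toAdd t).2)]
    refine Ideal.Quotient.eq.mpr (diff_mem_J hlat hΔtot hrefl hμ _ _ ?_ ?_ rfl ?_)
    · exact secA_mem hlat hΔtot hrefl hμ (Multiplicative.toAdd (s * t)).2
    · exact (Sbar Δ).add_mem
        (secA_mem hlat hΔtot hrefl hμ (Multiplicative.toAdd s).2)
        (secA_mem hlat hΔtot hrefl hμ (Multiplicative.toAdd t).2)
    · show ∑ j, secA μ _ _ j = ∑ j, (secA μ _ _ + secA μ _ _) j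
      simp only [Pi.add_apply, Finset.sum_add_distrib, secA_sum]
      rfl

/-- the induced algebra homomorphism `ψ : ℂ[σ∨ ∩ N] → ℂ[σ̄∨ ∩ N̄]/J` -/
def psiA : AddMonoidAlgebra ℂ (Ssig Δtot) →ₐ[ℂ] (AddMonoidAlgebra ℂ (Sbar Δ) ⧸ Jdiff Δ) :=
  AddMonoidAlgebra.lift ℂ _ (Ssig Δtot) (Fmon hlat hΔtot hrefl hμ)

variable (hmap : ∀ y : Lbar d k, y ∈ Sbar Δ → pL y ∈ Ssig Δtot)
  (φ : AddMonoidAlgebra ℂ (Sbar Δ) →+* AddMonoidAlgebra ℂ (Ssig Δtot))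
  (hφ : ∀ (y : Sbar Δ) (c : ℂ),
    φ (AddMonoidAlgebra.single y c) =
      AddMonoidAlgebra.single (⟨pL (y : Lbar d k), hmap y y.2⟩ : Ssig Δtot) c)

set_option synthInstance.maxHeartbeats 1000000 in
set_option maxHeartbeats 1000000 in
include hlat hΔtot hrefl hμ hmap hφ in
lemma psi_phi (g : AddMonoidAlgebra ℂ (Sbar Δ)) :
    psiA hlat hΔtot hrefl hμ (φ g) = Ideal.Quotient.mk (Jdiff Δ) g := by
  induction g using AddMonoidAlgebra.induction with
  | zero => simp
  | single_add y c f hy hc ih =>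
    rw [map_add, map_add, map_add, ih]
    congr 1
    rw [hφ, psiA, AddMonoidAlgebra.lift_single]
    have hFval : Fmon hlat hΔtot hrefl hμ
        (Multiplicative.ofAdd (⟨pL (y : Lbar d k), hmap y y.2⟩ : Ssig Δtot)) =
        Ideal.Quotient.mk (Jdiff Δ)
          (chi (Sbar Δ) ((y : Lbar d k).1, secA μ (y : Lbar d k).1 (∑ t, (y : Lbar d k).2 t))) :=
      rfl
    rw [hFval]
    have hchi : Ideal.Quotient.mk (Jdiff Δ)
        (chi (Sbar Δ) ((y : Lbar d k).1, secA μ (y : Lbar d k).1 (∑ t, (y : Lbar d k).2 t))) =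
        Ideal.Quotient.mk (Jdiff Δ) (chi (Sbar Δ) (y : Lbar d k)) := by
      refine Ideal.Quotient.eq.mpr (diff_mem_J hlat hΔtot hrefl hμ _ _ ?_ y.2 rfl ?_)
      · exact secA_mem hlat hΔtot hrefl hμ (pL_mem hlat hΔtot hrefl hμ y.2)
      · exact secA_sum _ _
    rw [hchi, chi_eq y.2]
    have : (⟨(y : Lbar d k), y.2⟩ : Sbar Δ) = y := rfl
    rw [this]
    have hsingle : (AddMonoidAlgebra.single y c : AddMonoidAlgebra ℂ (Sbar Δ)) =
        c • AddMonoidAlgebra.single y (1 : ℂ) := by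
      rw [AddMonoidAlgebra.smul_single']; norm_num
    rw [hsingle, ← Ideal.Quotient.mkₐ_eq_mk ℂ (Jdiff Δ), map_smul]

include hlat hΔtot hrefl hμ hmap hφ in
lemma phi_surj : Function.Surjective φ := by
  intro h
  induction h using AddMonoidAlgebra.induction with
  | zero => exact ⟨0, map_zero φ⟩
  | single_add s c f hs hc ih =>
    obtain ⟨g, hg⟩ := ih
    refine ⟨AddMonoidAlgebra.single
      (⟨((s : Lsig d).1, secA μ (s : Lsig d).1 (s : Lsig d).2),
        secA_mem hlat hΔtot hrefl hμ s.2⟩ : Sbar Δ) c + g, ?_⟩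
    rw [map_add, hg, hφ]
    congr 1
    refine congrArg (fun t => AddMonoidAlgebra.single t c) (Subtype.ext ?_)
    show (((s : Lsig d).1, ∑ t, secA μ (s : Lsig d).1 (s : Lsig d).2 t) : Lsig d) = (s : Lsig d)
    rw [secA_sum]

include hlat hΔtot hrefl hμ hmap hφ in
lemma ker_phi {g : AddMonoidAlgebra ℂ (Sbar Δ)} (hg : φ g = 0) : g ∈ Jdiff Δ := by
  have h := psi_phi hlat hΔtot hrefl hμ hmap φ hφ g
  rw [hg, map_zero] at h
  exact Ideal.Quotient.eq_zero_iff_mem.mp h.symm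

end Psi
/-- the kernel of `ℂ[σ̄∨ ∩ N̄] → ℂ[σ∨ ∩ N]/(f)` is generated by `f̄` and
`χ^{rᵢ*} − χ^{r₀*}`, `i = 1, …, k`. -/
theorem kernel_generated_by_fbar_and_differences {d k : ℕ}
    (Δ : Fin (k+1) → Set (Fin d → ℝ))
    (hlat : ∀ i, IsLatticePolytope (Δ i))
    (Δtot : Set (Fin d → ℝ)) (hΔtot : Δtot = ∑ i, Δ i)
    (hrefl : IsReflexive Δtot)
    -- p maps σ̄∨ ∩ (ℤ^d ⊕ ℤ^{k+1}) into σ∨ ∩ (ℤ^d ⊕ ℤ)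
    (hmap : ∀ y : Lbar d k, y ∈ Sbar Δ → pL y ∈ Ssig Δtot)
    -- the induced ℂ-algebra homomorphism φ with φ(χ^y) = χ^{p(y)}
    (φ : AddMonoidAlgebra ℂ (Sbar Δ) →+* AddMonoidAlgebra ℂ (Ssig Δtot))
    (hφ : ∀ (y : Sbar Δ) (c : ℂ),
      φ (AddMonoidAlgebra.single y c) =
        AddMonoidAlgebra.single (⟨pL (y : Lbar d k), hmap y y.2⟩ : Ssig Δtot) c)
    -- arbitrary coefficients a_n for n ∈ Δ* ∩ ℤ^d
    (a : (Fin d → ℤ) → ℂ)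
    -- μ n j = min⟨Δⱼ, n⟩ (an integer)
    (μ : (Fin d → ℤ) → Fin (k+1) → ℤ)
    (hμ : ∀ n j, (μ n j : ℝ) = minPair (Δ j) (fun i => (n i : ℝ)))
    -- f = Σ_{n ∈ Δ* ∩ ℤ^d} a_n χ^{(n,1)}
    (f : AddMonoidAlgebra ℂ (Ssig Δtot))
    (hf : f = ∑ᶠ n ∈ {n : Fin d → ℤ | (fun i => (n i : ℝ)) ∈ polarDual Δtot},
        a n • chi (Ssig Δtot) (n, 1))
    -- f̄ = a₀χ^{r₀*} + Σ_{0 ≠ n ∈ Δ* ∩ ℤ^d} a_n χ^{n − Σⱼ min⟨Δⱼ,n⟩rⱼ*}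
    (fbar : AddMonoidAlgebra ℂ (Sbar Δ))
    (hfbar : fbar = a 0 • chi (Sbar Δ) (0, Pi.single 0 1) +
        ∑ᶠ n ∈ {n : Fin d → ℤ | n ≠ 0 ∧ (fun i => (n i : ℝ)) ∈ polarDual Δtot},
          a n • chi (Sbar Δ) (n, fun j => -μ n j)) :
    -- all relevant exponents lie in the corresponding cones
    ((((0 : Fin d → ℤ), Pi.single 0 1) : Lbar d k) ∈ Sbar Δ) ∧
    (∀ i : Fin k, (((0 : Fin d → ℤ), Pi.single i.succ 1) : Lbar d k) ∈ Sbar Δ) ∧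
    (∀ n : Fin d → ℤ, (fun i => (n i : ℝ)) ∈ polarDual Δtot →
      (((n, 1) : Lsig d) ∈ Ssig Δtot) ∧
        (n ≠ 0 → ((n, fun j => -μ n j) : Lbar d k) ∈ Sbar Δ)) ∧
    -- the kernel of the composite ℂ[σ̄∨ ∩ N̄] → ℂ[σ∨ ∩ N]/(f)
    RingHom.ker ((Ideal.Quotient.mk (Ideal.span {f})).comp φ) =
      Ideal.span ({fbar} ∪
        ⋃ i : Fin k, {chi (Sbar Δ) ((0 : Fin d → ℤ), Pi.single i.succ 1) -
          chi (Sbar Δ) ((0 : Fin d → ℤ), Pi.single 0 1)}) := by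
  have hmem0 : (((0 : Fin d → ℤ), Pi.single 0 1) : Lbar d k) ∈ Sbar Δ :=
    single_exp_mem hlat hΔtot hrefl hμ 0
  have hmemi : ∀ i : Fin k, (((0 : Fin d → ℤ), Pi.single i.succ 1) : Lbar d k) ∈ Sbar Δ :=
    fun i => single_exp_mem hlat hΔtot hrefl hμ i.succ
  have hmem3 : ∀ n : Fin d → ℤ, (fun i => (n i : ℝ)) ∈ polarDual Δtot →
      (((n, 1) : Lsig d) ∈ Ssig Δtot) ∧
        (n ≠ 0 → ((n, fun j => -μ n j) : Lbar d k) ∈ Sbar Δ) := by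
    intro n hn
    constructor
    · rw [mem_Ssig_iff hlat hΔtot hrefl hμ]
      have := sum_mu_ge hlat hΔtot hrefl hμ n hn
      omega
    · intro _
      rw [mem_Sbar_iff hlat hΔtot hrefl hμ]
      exact fun j => le_refl _
  refine ⟨hmem0, hmemi, hmem3, ?_⟩
  -- finite sets of lattice points
  have hfin : {n : Fin d → ℤ | (fun i => (n i : ℝ)) ∈ polarDual Δtot}.Finite :=
    polar_lattice_finite hrefl
  have hfin' : {n : Fin d → ℤ | n ≠ 0 ∧ (fun i => (n i : ℝ)) ∈ polarDual Δtot}.Finite :=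
    hfin.subset fun n hn => hn.2
  have hF0 : hfin.toFinset = insert 0 hfin'.toFinset := by
    ext n
    simp only [Set.Finite.mem_toFinset, Finset.mem_insert, Set.mem_setOf_eq]
    constructor
    · intro hn
      rcases eq_or_ne n 0 with rfl | h0
      · exact Or.inl rfl
      · exact Or.inr ⟨h0, hn⟩
    · rintro (rfl | ⟨-, hn⟩)
      · exact zero_mem_polar
      · exact hn
  have h0nF' : (0 : Fin d → ℤ) ∉ hfin'.toFinset := by
    simp only [Set.Finite.mem_toFinset, Set.mem_setOf_eq]
    intro h
    exact h.1 rfl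
  -- rewrite f as a finite sum
  have hf' : f = a 0 • chi (Ssig Δtot) (0, 1) +
      ∑ n ∈ hfin'.toFinset, a n • chi (Ssig Δtot) (n, 1) := by
    rw [hf, finsum_mem_eq_finite_toFinset_sum _ hfin, hF0, Finset.sum_insert h0nF']
  -- rewrite fbar as a finite sum
  have hfbar' : fbar = a 0 • chi (Sbar Δ) ((0 : Fin d → ℤ), Pi.single 0 1) +
      ∑ n ∈ hfin'.toFinset, a n • chi (Sbar Δ) (n, fun j => -μ n j) := by
    rw [hfbar, finsum_mem_eq_finite_toFinset_sum _ hfin']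
  -- the image of a scaled character
  have hterm : ∀ (x : Lbar d k) (hx : x ∈ Sbar Δ) (c : ℂ),
      φ (c • chi (Sbar Δ) x) = c • chi (Ssig Δtot) (pL x) := by
    intro x hx c
    rw [chi_eq hx, AddMonoidAlgebra.smul_single', mul_one, hφ,
      chi_eq (hmap x hx), AddMonoidAlgebra.smul_single', mul_one]
  -- φ(fbar) = f
  have hpLe0 : pL (((0 : Fin d → ℤ), Pi.single 0 1) : Lbar d k) = ((0, 1) : Lsig d) := by
    show (((0 : Fin d → ℤ), ∑ t, (Pi.single 0 1 : Fin (k+1) → ℤ) t) : Lsig d) = (0, 1)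
    have : ∑ t, (Pi.single 0 1 : Fin (k+1) → ℤ) t = 1 := by
      simp [Pi.single_apply, Finset.sum_ite_eq']
    rw [this]
  have hphifbar : φ fbar = f := by
    rw [hfbar', map_add, map_sum, hterm _ hmem0, hpLe0, hf']
    congr 1
    refine Finset.sum_congr rfl fun n hn => ?_
    rw [Set.Finite.mem_toFinset] at hn
    rw [hterm _ ((hmem3 n hn.2).2 hn.1)]
    have hpLn : pL ((n, fun j => -μ n j) : Lbar d k) = ((n, 1) : Lsig d) := by
      show ((n, ∑ t, -μ n t) : Lsig d) = (n, 1)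
      have := sum_mu_eq_neg_one hlat hΔtot hrefl hμ n hn.1 hn.2
      rw [Finset.sum_neg_distrib, this]
      norm_num
    rw [hpLn]
  -- the two ideals
  have hJle : Jdiff Δ ≤ Ideal.span ({fbar} ∪
      ⋃ i : Fin k, {chi (Sbar Δ) ((0 : Fin d → ℤ), Pi.single i.succ 1) -
        chi (Sbar Δ) ((0 : Fin d → ℤ), Pi.single 0 1)}) :=
    Ideal.span_mono Set.subset_union_right
  refine le_antisymm ?_ ?_
  · -- ker ⊆ span
    intro g hg
    rw [RingHom.mem_ker, RingHom.comp_apply] at hg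
    have hspan : φ g ∈ Ideal.span {f} := Ideal.Quotient.eq_zero_iff_mem.mp hg
    obtain ⟨c, hc⟩ := Ideal.mem_span_singleton.mp hspan
    obtain ⟨h, hh⟩ := phi_surj hlat hΔtot hrefl hμ hmap φ hφ c
    have hker : φ (g - fbar * h) = 0 := by
      rw [map_sub, map_mul, hphifbar, hh, hc, sub_self]
    have hJ : g - fbar * h ∈ Jdiff Δ := ker_phi hlat hΔtot hrefl hμ hmap φ hφ hker
    have : g = (g - fbar * h) + fbar * h := by ring
    rw [this]
    exact add_mem (hJle hJ)
      (Ideal.mul_mem_right _ _ (Ideal.subset_span (Set.mem_union_left _ rfl)))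
  · -- span ⊆ ker
    rw [Ideal.span_le]
    rintro x (rfl | hx)
    · rw [SetLike.mem_coe, RingHom.mem_ker, RingHom.comp_apply, hphifbar]
      exact Ideal.Quotient.eq_zero_iff_mem.mpr (Ideal.subset_span rfl)
    · obtain ⟨i, hxs⟩ := Set.mem_iUnion.mp hx
      rw [Set.mem_singleton_iff] at hxs
      subst hxs
      rw [SetLike.mem_coe, RingHom.mem_ker, RingHom.comp_apply]
      have : φ (chi (Sbar Δ) ((0 : Fin d → ℤ), Pi.single i.succ 1) -
          chi (Sbar Δ) ((0 : Fin d → ℤ), Pi.single 0 1)) = 0 := by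
        rw [map_sub, chi_eq (hmemi i), chi_eq hmem0, hφ, hφ]
        have he : (⟨pL (((0 : Fin d → ℤ), Pi.single i.succ 1) : Lbar d k),
            hmap _ (hmemi i)⟩ : Ssig Δtot) =
            (⟨pL (((0 : Fin d → ℤ), Pi.single 0 1) : Lbar d k),
              hmap _ hmem0⟩ : Ssig Δtot) := by
          refine Subtype.ext ?_
          show (((0 : Fin d → ℤ), ∑ t, (Pi.single i.succ 1 : Fin (k+1) → ℤ) t) : Lsig d) =
            ((0, ∑ t, (Pi.single 0 1 : Fin (k+1) → ℤ) t) : Lsig d)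
          have e1 : ∑ t, (Pi.single i.succ 1 : Fin (k+1) → ℤ) t = 1 := by
            simp [Pi.single_apply, Finset.sum_ite_eq']
          have e2 : ∑ t, (Pi.single 0 1 : Fin (k+1) → ℤ) t = 1 := by
            simp [Pi.single_apply, Finset.sum_ite_eq']
          rw [e1, e2]
        rw [he, sub_self]
      rw [this, map_zero]
end
end
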